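/- arXiv:2104.07120 — 6 statements merged into one kernel-verified Lean document; each statement's English description precedes it below -/
import Mathlib

section
/- Let a and b be integers with a ≤ b and let g : ℝ → ℝ be continuously differentiable on [a, b]. Then |∑_{n=a}^{b} g(n) − ∫_a^b g(x) dx − (g(a) + g(b))/2| ≤ (1/2) ∫_a^b |g'(x)| dx. -/
open intervalIntegral

private lemma step_bound (u : ℝ) (g g' : ℝ → ℝ)
    (hderiv : ∀ x ∈ Set.Icc u (u + 1), HasDerivAt g (g' x) x)
    (hcont : ContinuousOn g' (Set.Icc u (u + 1))) :
    |(g u + g (u + 1)) / 2 - ∫ x in u..(u + 1), g x| ≤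
      (1 / 2) * ∫ x in u..(u + 1), |g' x| := by
  have hle : u ≤ u + 1 := by linarith
  have huicc : Set.uIcc u (u + 1) = Set.Icc u (u + 1) := Set.uIcc_of_le hle
  have hφ : ∀ x ∈ Set.uIcc u (u + 1), HasDerivAt (fun x => x - u - 1/2) ((fun _ => (1:ℝ)) x) x := by
    intro x _
    simpa using ((hasDerivAt_id x).sub_const u).sub_const (1/2)
  have hg : ∀ x ∈ Set.uIcc u (u + 1), HasDerivAt g (g' x) x := by
    rw [huicc]; exact hderiv
  have hg'int : IntervalIntegrable g' MeasureTheory.volume u (u + 1) := by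
    apply ContinuousOn.intervalIntegrable; rwa [huicc]
  have hgcont : ContinuousOn g (Set.Icc u (u + 1)) := fun x hx => (hderiv x hx).continuousAt.continuousWithinAt
  have h1int : IntervalIntegrable (fun _ => (1:ℝ)) MeasureTheory.volume u (u + 1) :=
    intervalIntegrable_const
  have key := intervalIntegral.integral_mul_deriv_eq_deriv_mul hφ hg h1int hg'int
  have heq : (g u + g (u + 1)) / 2 - ∫ x in u..(u + 1), g x
      = ∫ x in u..(u + 1), (x - u - 1/2) * g' x := by
    rw [key]
    have : (∫ x in u..(u+1), (fun _ => (1:ℝ)) x * g x) = ∫ x in u..(u+1), g x := by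
      simp
    rw [this]; ring
  rw [heq]
  have h2 : |∫ x in u..(u + 1), (x - u - 1/2) * g' x| ≤ ∫ x in u..(u + 1), |(x - u - 1/2) * g' x| := by
    have := intervalIntegral.norm_integral_le_integral_norm (f := fun x => (x - u - 1/2) * g' x)
      (μ := MeasureTheory.volume) hle
    simpa only [Real.norm_eq_abs] using this
  refine h2.trans ?_
  rw [show (1/2 : ℝ) * ∫ x in u..(u + 1), |g' x| = ∫ x in u..(u + 1), (1/2) * |g' x| by
    rw [intervalIntegral.integral_const_mul]]
  apply intervalIntegral.integral_mono_on hle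
  · apply ContinuousOn.intervalIntegrable
    rw [huicc]
    exact (ContinuousOn.mul ((Continuous.continuousOn (by continuity))) hcont).abs
  · exact (hg'int.abs).const_mul _
  · intro x hx
    rw [abs_mul]
    gcongr
    rw [abs_le]
    constructor <;> [linarith [hx.1]; linarith [hx.2]]

private lemma aux_bound (a B : ℤ) (g g' : ℝ → ℝ)
    (hderiv : ∀ x ∈ Set.Icc (a : ℝ) (B : ℝ), HasDerivAt g (g' x) x)
    (hcont : ContinuousOn g' (Set.Icc (a : ℝ) (B : ℝ))) :
    ∀ b : ℤ, a ≤ b → b ≤ B →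
    |∑ n ∈ Finset.Icc a b, g (n : ℝ) - (∫ x in (a : ℝ)..(b : ℝ), g x)
        - (g (a : ℝ) + g (b : ℝ)) / 2| ≤
      (1 / 2) * ∫ x in (a : ℝ)..(b : ℝ), |g' x| := by
  intro b hb
  refine Int.le_induction (motive := fun b _ => b ≤ B →
    |∑ n ∈ Finset.Icc a b, g (n : ℝ) - (∫ x in (a : ℝ)..(b : ℝ), g x)
        - (g (a : ℝ) + g (b : ℝ)) / 2| ≤
      (1 / 2) * ∫ x in (a : ℝ)..(b : ℝ), |g' x|) ?_ ?_ b hb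
  · intro _; simp
  · intro b hab ih hB
    have hbB : b ≤ B := by omega
    have ih' := ih hbB
    have hab' : (a : ℝ) ≤ (b : ℝ) := by exact_mod_cast hab
    have hb1 : ((b + 1 : ℤ) : ℝ) = (b : ℝ) + 1 := by push_cast; ring
    have hB' : ((b : ℝ) + 1) ≤ (B : ℝ) := by rw [← hb1]; exact_mod_cast hB
    have hsub1 : Set.Icc (a : ℝ) (b : ℝ) ⊆ Set.Icc (a : ℝ) (B : ℝ) := by
      apply Set.Icc_subset_Icc_right; linarith
    have hsub2 : Set.Icc (b : ℝ) ((b : ℝ) + 1) ⊆ Set.Icc (a : ℝ) (B : ℝ) :=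
      Set.Icc_subset_Icc hab' hB'
    have hstep := step_bound (b : ℝ) g g' (fun x hx => hderiv x (hsub2 hx)) (hcont.mono hsub2)
    have hg'int2 : IntervalIntegrable (fun x => |g' x|) MeasureTheory.volume (a : ℝ) (b : ℝ) :=
      ((hcont.mono hsub1).abs).intervalIntegrable_of_Icc hab'
    have hg'int3 : IntervalIntegrable (fun x => |g' x|) MeasureTheory.volume (b : ℝ) ((b : ℝ) + 1) :=
      ((hcont.mono hsub2).abs).intervalIntegrable_of_Icc (by linarith)
    have hgcont : ContinuousOn g (Set.Icc (a : ℝ) (B : ℝ)) :=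
      fun x hx => (hderiv x hx).continuousAt.continuousWithinAt
    have hgint1 : IntervalIntegrable g MeasureTheory.volume (a : ℝ) (b : ℝ) :=
      (hgcont.mono hsub1).intervalIntegrable_of_Icc hab'
    have hgint2 : IntervalIntegrable g MeasureTheory.volume (b : ℝ) ((b : ℝ) + 1) :=
      (hgcont.mono hsub2).intervalIntegrable_of_Icc (by linarith)
    have hsplit : (∫ x in (a : ℝ)..((b+1 : ℤ) : ℝ), g x)
        = (∫ x in (a : ℝ)..(b : ℝ), g x) + ∫ x in (b : ℝ)..((b : ℝ) + 1), g x := by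
      rw [hb1]; exact (intervalIntegral.integral_add_adjacent_intervals hgint1 hgint2).symm
    have hsplit' : (∫ x in (a : ℝ)..((b+1 : ℤ) : ℝ), |g' x|)
        = (∫ x in (a : ℝ)..(b : ℝ), |g' x|) + ∫ x in (b : ℝ)..((b : ℝ) + 1), |g' x| := by
      rw [hb1]; exact (intervalIntegral.integral_add_adjacent_intervals hg'int2 hg'int3).symm
    have hsum : ∑ n ∈ Finset.Icc a (b + 1), g (n : ℝ)
        = (∑ n ∈ Finset.Icc a b, g (n : ℝ)) + g ((b+1 : ℤ) : ℝ) := by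
      have hins : Finset.Icc a (b + 1) = insert (b + 1) (Finset.Icc a b) := by
        ext x; simp; omega
      rw [hins, Finset.sum_insert (by simp)]
      ring
    calc |∑ n ∈ Finset.Icc a (b+1), g (n : ℝ) - (∫ x in (a : ℝ)..((b+1 : ℤ) : ℝ), g x)
        - (g (a : ℝ) + g ((b+1 : ℤ) : ℝ)) / 2|
        = |(∑ n ∈ Finset.Icc a b, g (n : ℝ) - (∫ x in (a : ℝ)..(b : ℝ), g x)
            - (g (a : ℝ) + g (b : ℝ)) / 2)
          + ((g (b : ℝ) + g ((b : ℝ) + 1)) / 2 - ∫ x in (b : ℝ)..((b : ℝ) + 1), g x)| := by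
            rw [hsum, hsplit, hb1]; ring_nf
      _ ≤ _ + _ := abs_add_le _ _
      _ ≤ (1/2) * (∫ x in (a : ℝ)..(b : ℝ), |g' x|) + (1/2) * ∫ x in (b : ℝ)..((b : ℝ)+1), |g' x| :=
            add_le_add ih' hstep
      _ = (1/2) * ∫ x in (a : ℝ)..((b+1 : ℤ) : ℝ), |g' x| := by rw [hsplit']; ring

/-- Remainder bound for the Euler–Maclaurin formula at order `M = 0`: for integers
`a ≤ b` and `g` continuously differentiable on `[a, b]` with derivative `g'`,
`|∑_{n=a}^{b} g(n) − ∫_a^b g − (g a + g b)/2| ≤ (1/2) ∫_a^b |g'|`. -/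
theorem stmt_2 (a b : ℤ) (hab : a ≤ b) (g g' : ℝ → ℝ)
    (hderiv : ∀ x ∈ Set.Icc (a : ℝ) (b : ℝ), HasDerivAt g (g' x) x)
    (hcont : ContinuousOn g' (Set.Icc (a : ℝ) (b : ℝ))) :
    |∑ n ∈ Finset.Icc a b, g (n : ℝ) - (∫ x in (a : ℝ)..(b : ℝ), g x)
        - (g (a : ℝ) + g (b : ℝ)) / 2| ≤
      (1 / 2) * ∫ x in (a : ℝ)..(b : ℝ), |g' x| :=
  aux_bound a b g g' hderiv hcont b hab le_rfl
end

section
/- lim_{N→∞} [∑_{n=0}^{N−1} |cot((2n+1)π/(2N))|] / (N ln N) = 2/π. -/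
open Real Filter

private lemma cot_le_inv {θ : ℝ} (h1 : 0 < θ) (h2 : θ < π) : Real.cot θ ≤ 1/θ := by
  have hs : 0 < Real.sin θ := Real.sin_pos_of_pos_of_lt_pi h1 h2
  rw [Real.cot_eq_cos_div_sin, div_le_div_iff₀ hs h1]
  rcases le_or_gt (Real.cos θ) 0 with hc | hc
  · nlinarith
  · have hθ : θ < π/2 := by
      by_contra h
      push_neg at h
      have := Real.cos_nonpos_of_pi_div_two_le_of_le h (by linarith [Real.pi_pos])
      linarith
    have ht := Real.lt_tan h1 hθ
    rw [Real.tan_eq_sin_div_cos] at ht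
    have := (lt_div_iff₀ hc).mp ht
    nlinarith

private lemma inv_sub_le_cot {θ : ℝ} (h1 : 0 < θ) (h2 : θ ≤ π/2) :
    1/θ - θ/2 ≤ Real.cot θ := by
  have hπ := Real.pi_pos
  have hs : 0 < Real.sin θ := Real.sin_pos_of_pos_of_lt_pi h1 (by linarith)
  have hc : 0 ≤ Real.cos θ := Real.cos_nonneg_of_mem_Icc ⟨by linarith, h2⟩
  have hsle : Real.sin θ ≤ θ := Real.sin_le h1.le
  have hcge : 1 - θ^2/2 ≤ Real.cos θ := Real.one_sub_sq_div_two_le_cos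
  rw [Real.cot_eq_cos_div_sin, le_div_iff₀ hs]
  rcases le_or_gt (1/θ - θ/2) 0 with h | h
  · exact le_trans (mul_nonpos_of_nonpos_of_nonneg h hs.le) hc
  · calc (1/θ - θ/2) * Real.sin θ ≤ (1/θ - θ/2) * θ :=
          mul_le_mul_of_nonneg_left hsle h.le
      _ = 1 - θ^2/2 := by field_simp
      _ ≤ Real.cos θ := hcge

private lemma cot_nonneg_of_le_half {θ : ℝ} (h1 : 0 < θ) (h2 : θ ≤ π/2) :
    0 ≤ Real.cot θ := by
  have hπ := Real.pi_pos
  have hs : 0 < Real.sin θ := Real.sin_pos_of_pos_of_lt_pi h1 (by linarith)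
  have hc : 0 ≤ Real.cos θ := Real.cos_nonneg_of_mem_Icc ⟨by linarith, h2⟩
  rw [Real.cot_eq_cos_div_sin]
  exact div_nonneg hc hs.le

private lemma cot_pi_sub (θ : ℝ) : Real.cot (π - θ) = - Real.cot θ := by
  rw [Real.cot_eq_cos_div_sin, Real.cot_eq_cos_div_sin, Real.cos_pi_sub, Real.sin_pi_sub,
    neg_div]

private lemma abs_cot_upper {θ : ℝ} (h1 : 0 < θ) (h2 : θ < π) :
    |Real.cot θ| ≤ 1/θ + 1/(π - θ) := by
  have hπ := Real.pi_pos
  rcases le_or_gt θ (π/2) with h | h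
  · rw [abs_of_nonneg (cot_nonneg_of_le_half h1 h)]
    have hpθ : 0 < π - θ := by linarith
    have : (0:ℝ) < 1/(π - θ) := by positivity
    linarith [cot_le_inv h1 h2]
  · have h1' : 0 < π - θ := by linarith
    have h2' : π - θ ≤ π/2 := by linarith
    have hnn : 0 ≤ Real.cot (π - θ) := cot_nonneg_of_le_half h1' h2'
    have hco : Real.cot θ = - Real.cot (π - θ) := by rw [cot_pi_sub]; ring
    rw [hco, abs_neg, abs_of_nonneg hnn]
    have := cot_le_inv h1' (by linarith)
    have hpos : (0:ℝ) < 1/θ := by positivity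
    linarith

private lemma abs_cot_lower {θ : ℝ} (h1 : 0 < θ) (h2 : θ < π) :
    1/θ + 1/(π - θ) - 2 ≤ |Real.cot θ| := by
  have hπ3 := Real.pi_gt_three
  have hπ4 : π < 4 := by linarith [Real.pi_lt_d2]
  rcases le_or_gt θ (π/2) with h | h
  · rw [abs_of_nonneg (cot_nonneg_of_le_half h1 h)]
    have hlo := inv_sub_le_cot h1 h
    have hA : 1/(π - θ) ≤ 2/π := by
      rw [div_le_div_iff₀ (by linarith) (by linarith)]
      linarith
    have hB : 2/π ≤ 1 := by rw [div_le_one (by linarith)]; linarith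
    linarith
  · have h1' : 0 < π - θ := by linarith
    have h2' : π - θ ≤ π/2 := by linarith
    have hnn : 0 ≤ Real.cot (π - θ) := cot_nonneg_of_le_half h1' h2'
    have hco : Real.cot θ = - Real.cot (π - θ) := by rw [cot_pi_sub]; ring
    rw [hco, abs_neg, abs_of_nonneg hnn]
    have hlo := inv_sub_le_cot h1' h2'
    have hA : 1/θ ≤ 2/π := by
      rw [div_le_div_iff₀ (by linarith) (by linarith)]
      linarith
    have hB : 2/π ≤ 1 := by rw [div_le_one (by linarith)]; linarith
    linarith

noncomputable def Aseq (N : ℕ) : ℝ := ∑ n ∈ Finset.range N, 1/(2*(n:ℝ)+1)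

private lemma Aseq_eq (N : ℕ) :
    Aseq N = (harmonic (2*N) : ℝ) - (harmonic N : ℝ)/2 := by
  induction N with
  | zero => simp [Aseq, harmonic]
  | succ n ih =>
    have h2 : 2*(n+1) = (2*n) + 1 + 1 := by ring
    rw [Aseq, Finset.sum_range_succ, ← Aseq, ih, h2, harmonic_succ, harmonic_succ,
      harmonic_succ]
    push_cast
    have h1 : (2*(n:ℝ)+1) ≠ 0 := by positivity
    have h2 : (2*(n:ℝ)+2) ≠ 0 := by positivity
    have h3 : ((n:ℝ)+1) ≠ 0 := by positivity
    field_simp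
    ring

private lemma Aseq_bound {N : ℕ} (hN : 1 ≤ N) : |Aseq N - Real.log N / 2| ≤ 2 := by
  have hNpos : (0:ℝ) < N := by exact_mod_cast hN
  have h1 : Real.log (2*(N:ℝ)+1) ≤ (harmonic (2*N) : ℝ) := by
    have := log_add_one_le_harmonic (2*N)
    push_cast at this ⊢
    convert this using 2
  have h2 : (harmonic (2*N) : ℝ) ≤ 1 + Real.log (2*(N:ℝ)) := by
    have := harmonic_le_one_add_log (2*N)
    push_cast at this ⊢
    convert this using 3
  have h3 : Real.log ((N:ℝ)+1) ≤ (harmonic N : ℝ) := by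
    have := log_add_one_le_harmonic N
    push_cast at this ⊢
    convert this using 2
  have h4 : (harmonic N : ℝ) ≤ 1 + Real.log N := harmonic_le_one_add_log N
  have hlog2 : Real.log (2*(N:ℝ)) = Real.log 2 + Real.log N :=
    Real.log_mul two_ne_zero (ne_of_gt hNpos)
  have hmono1 : Real.log (2*(N:ℝ)) ≤ Real.log (2*(N:ℝ)+1) :=
    Real.log_le_log (by linarith) (by linarith)
  have hmono2 : Real.log (N:ℝ) ≤ Real.log ((N:ℝ)+1) :=
    Real.log_le_log hNpos (by linarith)
  have hl2a : (0:ℝ) ≤ Real.log 2 := Real.log_nonneg (by norm_num)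
  have hl2b : Real.log 2 ≤ 1 := by
    have := Real.log_le_sub_one_of_pos (by norm_num : (0:ℝ) < 2)
    linarith
  rw [Aseq_eq, abs_le]
  constructor <;> nlinarith

private lemma theta_sum (N : ℕ) (hN : 1 ≤ N) :
    ∑ n ∈ Finset.range N, (1/((2*(n:ℝ)+1)*π/(2*(N:ℝ))) +
      1/(π - (2*(n:ℝ)+1)*π/(2*(N:ℝ)))) = (4*(N:ℝ)/π) * Aseq N := by
  have hNpos : (0:ℝ) < N := by exact_mod_cast hN
  have hπ := Real.pi_pos
  have key : ∑ n ∈ Finset.range N, 1/(π - (2*(n:ℝ)+1)*π/(2*(N:ℝ)))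
      = ∑ n ∈ Finset.range N, 1/((2*(n:ℝ)+1)*π/(2*(N:ℝ))) := by
    rw [← Finset.sum_range_reflect (fun n => 1/((2*(n:ℝ)+1)*π/(2*(N:ℝ)))) N]
    apply Finset.sum_congr rfl
    intro j hj
    rw [Finset.mem_range] at hj
    have hj' : j + 1 ≤ N := hj
    have hcast : ((N - 1 - j : ℕ) : ℝ) = (N:ℝ) - 1 - j := by
      have : N - 1 - j = N - (j+1) := by omega
      rw [this, Nat.cast_sub hj']
      push_cast
      ring
    rw [hcast]
    congr 1
    field_simp
    ring
  rw [Finset.sum_add_distrib, key, ← two_mul, Aseq, Finset.mul_sum, Finset.mul_sum]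
  apply Finset.sum_congr rfl
  intro n hn
  have h1 : (2*(n:ℝ)+1) ≠ 0 := by positivity
  field_simp
  ring

private lemma sum_bounds (N : ℕ) (hN : 1 ≤ N) :
    (4*(N:ℝ)/π) * Aseq N - 2*N ≤
      (∑ n ∈ Finset.range N, |Real.cot ((2 * (n : ℝ) + 1) * Real.pi / (2 * (N : ℝ)))|) ∧
    (∑ n ∈ Finset.range N, |Real.cot ((2 * (n : ℝ) + 1) * Real.pi / (2 * (N : ℝ)))|) ≤
      (4*(N:ℝ)/π) * Aseq N := by
  have hNpos : (0:ℝ) < N := by exact_mod_cast hN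
  have hπ := Real.pi_pos
  have hθ : ∀ n ∈ Finset.range N, 0 < (2*(n:ℝ)+1)*π/(2*(N:ℝ)) ∧
      (2*(n:ℝ)+1)*π/(2*(N:ℝ)) < π := by
    intro n hn
    rw [Finset.mem_range] at hn
    have hnlt : (n:ℝ)+1 ≤ N := by exact_mod_cast hn
    constructor
    · positivity
    · rw [div_lt_iff₀ (by positivity)]
      nlinarith [mul_pos hπ (by linarith : (0:ℝ) < 2*(N:ℝ) - 2*(n:ℝ) - 1)]
  constructor
  · rw [← theta_sum N hN]
    have : ∑ n ∈ Finset.range N,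
        ((1/((2*(n:ℝ)+1)*π/(2*(N:ℝ))) + 1/(π - (2*(n:ℝ)+1)*π/(2*(N:ℝ)))) - 2)
        = (∑ n ∈ Finset.range N, (1/((2*(n:ℝ)+1)*π/(2*(N:ℝ))) +
            1/(π - (2*(n:ℝ)+1)*π/(2*(N:ℝ))))) - 2*N := by
      rw [Finset.sum_sub_distrib, Finset.sum_const, Finset.card_range]
      ring
    rw [← this]
    apply Finset.sum_le_sum
    intro n hn
    exact abs_cot_lower (hθ n hn).1 (hθ n hn).2
  · rw [← theta_sum N hN]
    apply Finset.sum_le_sum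
    intro n hn
    exact abs_cot_upper (hθ n hn).1 (hθ n hn).2

/-- `lim_{N→∞} [∑_{n=0}^{N-1} |cot((2n+1)π/(2N))|] / (N ln N) = 2/π`. -/
theorem stmt_5 :
    Tendsto
      (fun N : ℕ =>
        (∑ n ∈ Finset.range N,
            |Real.cot ((2 * (n : ℝ) + 1) * Real.pi / (2 * (N : ℝ)))|) /
          ((N : ℝ) * Real.log (N : ℝ)))
      atTop (nhds (2 / Real.pi)) := by
  have hπ := Real.pi_pos
  have hL : Tendsto (fun N : ℕ => 1/Real.log N) atTop (nhds 0) := by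
    simpa [one_div, Pi.inv_def, Function.comp_def] using
      (Real.tendsto_log_atTop.comp tendsto_natCast_atTop_atTop).inv_tendsto_atTop
  have hlo : Tendsto (fun N : ℕ => 2/π - (8/π + 2) * (1/Real.log N)) atTop
      (nhds (2/π)) := by
    have hc : Tendsto (fun _ : ℕ => (2/π : ℝ)) atTop (nhds (2/π)) := tendsto_const_nhds
    simpa using hc.sub (hL.const_mul (8/π + 2))
  have hhi : Tendsto (fun N : ℕ => 2/π + (8/π) * (1/Real.log N)) atTop
      (nhds (2/π)) := by
    have hc : Tendsto (fun _ : ℕ => (2/π : ℝ)) atTop (nhds (2/π)) := tendsto_const_nhds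
    simpa using hc.add (hL.const_mul (8/π))
  refine tendsto_of_tendsto_of_tendsto_of_le_of_le' hlo hhi ?_ ?_
  · filter_upwards [eventually_ge_atTop 3] with N hN
    have hN1 : 1 ≤ N := by omega
    have hNpos : (0:ℝ) < N := by exact_mod_cast hN1
    have hlog : (0:ℝ) < Real.log N := Real.log_pos (by exact_mod_cast (by omega : 1 < N))
    have hb := (sum_bounds N hN1).1
    have hA := (abs_le.mp (Aseq_bound hN1)).1
    rw [le_div_iff₀ (by positivity)]
    calc (2/π - (8/π + 2) * (1/Real.log N)) * ((N:ℝ) * Real.log N)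
        = (4*(N:ℝ)/π) * (Real.log N/2 - 2) - 2*N := by
          field_simp
          ring
      _ ≤ (4*(N:ℝ)/π) * Aseq N - 2*N := by
          have h4 : (0:ℝ) ≤ 4*(N:ℝ)/π := by positivity
          nlinarith
      _ ≤ _ := hb
  · filter_upwards [eventually_ge_atTop 3] with N hN
    have hN1 : 1 ≤ N := by omega
    have hNpos : (0:ℝ) < N := by exact_mod_cast hN1
    have hlog : (0:ℝ) < Real.log N := Real.log_pos (by exact_mod_cast (by omega : 1 < N))
    have hb := (sum_bounds N hN1).2
    have hA := (abs_le.mp (Aseq_bound hN1)).2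
    rw [div_le_iff₀ (by positivity)]
    calc (∑ n ∈ Finset.range N, |Real.cot ((2 * (n : ℝ) + 1) * Real.pi / (2 * (N : ℝ)))|)
        ≤ (4*(N:ℝ)/π) * Aseq N := hb
      _ ≤ (4*(N:ℝ)/π) * (Real.log N/2 + 2) := by
          have h4 : (0:ℝ) ≤ 4*(N:ℝ)/π := by positivity
          nlinarith
      _ = (2/π + (8/π) * (1/Real.log N)) * ((N:ℝ) * Real.log N) := by
          field_simp
          ring
end

section
/- Let Q be a natural number and let κ : ℝ → ℝ be (2Q+1)-times continuously differentiable on [1, ∞), such that for every q with 0 ≤ q ≤ 2Q the q-th derivative κ^{(q)} is bounded on [1, ∞), and the (2Q+1)-st derivative κ^{(2Q+1)} is absolutely integrable on [1, ∞). Then there exists a constant C > 0 such that for every integer M ≥ 1 and every k ∈ (0, π], |∑_{l=1}^{M} κ(l) sin(k l) − ∫_1^M κ(x) sin(k x) dx| ≤ C. -/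
open Real Filter MeasureTheory intervalIntegral

set_option maxHeartbeats 1000000

lemma bern2_eval (t : ℝ) : (Polynomial.map (algebraMap ℚ ℝ) (Polynomial.bernoulli 2)).eval t
    = t^2 - t + 1/6 := by
  simp [Polynomial.bernoulli, Finset.sum_range_succ]
  norm_num [bernoulli]
  ring

lemma hasSum_cos_sq (x : ℝ) (hx : x ∈ Set.Icc (0:ℝ) 1) :
    HasSum (fun n : ℕ => 1 / (n : ℝ) ^ 2 * Real.cos (2 * π * n * x))
      (π ^ 2 * (x^2 - x + 1/6)) := by
  have h := hasSum_one_div_nat_pow_mul_cos (k := 1) one_ne_zero hx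
  rw [show (2*1) = 2 from rfl] at h
  have h2 : ((Nat.factorial 2 : ℕ) : ℝ) = 2 := by norm_num [Nat.factorial]
  have e : ((-1 : ℝ)) ^ (1+1) * (2*π)^2 / 2 / ((Nat.factorial 2 : ℕ) : ℝ) *
      (Polynomial.map (algebraMap ℚ ℝ) (Polynomial.bernoulli 2)).eval x
      = π ^ 2 * (x^2 - x + 1/6) := by
    rw [bern2_eval, h2]; ring
  rw [← e]
  exact h

lemma hasSum_cos_fract (x : ℝ) :
    HasSum (fun n : ℕ => 1 / (n : ℝ) ^ 2 * Real.cos (2 * π * n * x))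
      (π ^ 2 * ((Int.fract x)^2 - Int.fract x + 1/6)) := by
  have h := hasSum_cos_sq (Int.fract x) ⟨Int.fract_nonneg x, (Int.fract_lt_one x).le⟩
  convert h using 2 with n
  rw [Int.fract]
  rw [mul_sub, show 2*π*(n:ℝ)*x - 2*π*(n:ℝ)*(⌊x⌋:ℝ)
      = 2*π*(n:ℝ)*x - ((n * ⌊x⌋ : ℤ) : ℝ) * (2*π) by push_cast; ring,
    Real.cos_sub_int_mul_two_pi]

/-- interval integrability of a bounded measurable function times a continuous one -/
lemma II_bdd_mul (q w : ℝ → ℝ) (a b : ℝ) (hab : a ≤ b) (hq : Measurable q) (C : ℝ)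
    (hqb : ∀ x, |q x| ≤ C) (hw : ContinuousOn w (Set.Icc a b)) :
    IntervalIntegrable (fun x => q x * w x) volume a b := by
  rw [intervalIntegrable_iff_integrableOn_Ioc_of_le hab]
  have hwi : IntegrableOn w (Set.Ioc a b) volume :=
    (hw.integrableOn_Icc).mono_set Set.Ioc_subset_Icc_self
  exact Integrable.bdd_mul hwi (hq.aestronglyMeasurable) (c := C) (Filter.Eventually.of_forall fun x => by
    simpa [Real.norm_eq_abs] using hqb x)


lemma abs_sub3 (a b c : ℝ) : |a - b - c| ≤ |a| + |b| + |c| := by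
  calc |a - b - c| ≤ |a - b| + |c| := by simpa [sub_eq_add_neg, abs_neg] using abs_add_le (a-b) (-c)
    _ ≤ |a| + |b| + |c| := by
        have : |a - b| ≤ |a| + |b| := by simpa [sub_eq_add_neg, abs_neg] using abs_add_le a (-b)
        linarith

/-- Oscillatory integral bound for non-small frequencies. -/
lemma oscA : ∀ (r : ℕ) (h : ℕ → ℝ → ℝ) (B A : ℝ), 0 ≤ B → 0 ≤ A →
    (∀ s < r, ∀ x ∈ Set.Ici (1:ℝ), HasDerivAt (h s) (h (s+1) x) x) →
    (∀ s < r, ∀ x ∈ Set.Ici (1:ℝ), |h s x| ≤ B) →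
    ContinuousOn (h r) (Set.Ici (1:ℝ)) →
    IntegrableOn (fun x => |h r x|) (Set.Ici (1:ℝ)) →
    (∫ x in Set.Ici (1:ℝ), |h r x|) ≤ A →
    ∀ (ω φ M : ℝ), 1 ≤ |ω| → 1 ≤ M →
      |∫ x in (1:ℝ)..M, h 0 x * Real.cos (ω*x + φ)| ≤ 2*B*r + A := by
  intro r
  induction r with
  | zero =>
    intro h B A hB hA hder hbd hct hin hAr ω φ M hω hM
    have h1 : |∫ x in (1:ℝ)..M, h 0 x * Real.cos (ω*x + φ)|
        ≤ ∫ x in (1:ℝ)..M, |h 0 x * Real.cos (ω*x + φ)| :=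
      intervalIntegral.abs_integral_le_integral_abs hM
    have hIcc : Set.uIcc (1:ℝ) M = Set.Icc 1 M := Set.uIcc_of_le hM
    have hctI : ContinuousOn (h 0) (Set.Icc 1 M) := hct.mono (Set.Icc_subset_Ici_self)
    have h2 : ∫ x in (1:ℝ)..M, |h 0 x * Real.cos (ω*x + φ)| ≤ ∫ x in (1:ℝ)..M, |h 0 x| := by
      apply intervalIntegral.integral_mono_on hM
      · apply ContinuousOn.intervalIntegrable
        rw [hIcc]
        exact (hctI.mul (Real.continuous_cos.comp (by fun_prop)).continuousOn).abs
      · apply ContinuousOn.intervalIntegrable; rw [hIcc]; exact hctI.abs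
      · intro x _
        rw [abs_mul]
        exact mul_le_of_le_one_right (abs_nonneg _) (Real.abs_cos_le_one _)
    have h3 : ∫ x in (1:ℝ)..M, |h 0 x| ≤ ∫ x in Set.Ici (1:ℝ), |h 0 x| := by
      rw [intervalIntegral.integral_of_le hM]
      apply MeasureTheory.setIntegral_mono_set hin
        (Filter.Eventually.of_forall (fun x => abs_nonneg _))
      exact (Set.Ioc_subset_Icc_self.trans Set.Icc_subset_Ici_self).eventuallyLE
    simp only [Nat.cast_zero, mul_zero, zero_add]
    linarith
  | succ r ih =>
    intro h B A hB hA hder hbd hct hin hAr ω φ M hω hM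
    have hω0 : ω ≠ 0 := by intro h0; rw [h0] at hω; simp at hω; linarith
    have hIcc : Set.uIcc (1:ℝ) M = Set.Icc 1 M := Set.uIcc_of_le hM
    -- continuity of h 0 and h 1 on Ici 1
    have hc0 : ContinuousOn (h 0) (Set.Ici 1) := fun x hx =>
      ((hder 0 (Nat.succ_pos r) x hx).continuousAt).continuousWithinAt
    have hc1 : ContinuousOn (h 1) (Set.Ici 1) := by
      rcases Nat.eq_zero_or_pos r with hr | hr
      · subst hr; exact hct
      · exact fun x hx => ((hder 1 (by omega) x hx).continuousAt).continuousWithinAt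
    set v : ℝ → ℝ := fun x => Real.sin (ω*x+φ)/ω with hv_def
    have hv : ∀ x : ℝ, HasDerivAt v (Real.cos (ω*x+φ)) x := by
      intro x
      have h1 : HasDerivAt (fun x : ℝ => ω*x+φ) ω x := by
        simpa using ((hasDerivAt_id x).const_mul ω).add_const φ
      have h2 := (h1.sin).div_const ω
      simpa [mul_div_assoc, mul_div_cancel_right₀ _ hω0] using h2
    have hmem : ∀ x ∈ Set.uIcc (1:ℝ) M, x ∈ Set.Ici (1:ℝ) := by
      intro x hx; rw [hIcc] at hx; exact hx.1
    have hint1 : IntervalIntegrable (h 1) volume 1 M := by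
      apply ContinuousOn.intervalIntegrable; rw [hIcc]
      exact hc1.mono Set.Icc_subset_Ici_self
    have hIBP := intervalIntegral.integral_mul_deriv_eq_deriv_mul
      (a := (1:ℝ)) (b := M) (u := h 0) (u' := h 1) (v := v)
      (v' := fun x => Real.cos (ω*x+φ))
      (fun x hx => hder 0 (Nat.succ_pos r) x (hmem x hx))
      (fun x _ => hv x) hint1
      (by apply ContinuousOn.intervalIntegrable
          exact (Real.continuous_cos.comp (by fun_prop)).continuousOn)
    -- rewrite the remaining integral
    have hre : (∫ x in (1:ℝ)..M, h 1 x * v x)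
        = (∫ x in (1:ℝ)..M, h 1 x * Real.cos (ω*x + (φ - π/2))) / ω := by
      rw [← intervalIntegral.integral_div]
      apply intervalIntegral.integral_congr
      intro x _
      have hcs : Real.cos (ω*x + (φ - π/2)) = Real.sin (ω*x+φ) := by
        rw [show ω*x + (φ - π/2) = (ω*x+φ) - π/2 by ring, Real.cos_sub_pi_div_two]
      show h 1 x * v x = h 1 x * Real.cos (ω*x + (φ - π/2)) / ω
      rw [hcs, hv_def]; ring
    have hIH := ih (fun s => h (s+1)) B A hB hA
      (fun s hs x hx => hder (s+1) (by omega) x hx)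
      (fun s hs x hx => hbd (s+1) (by omega) x hx)
      hct hin hAr ω (φ - π/2) M hω hM
    have hvb : ∀ x : ℝ, |v x| ≤ 1 := by
      intro x
      rw [hv_def]
      simp only [abs_div]
      have hω1 : (0:ℝ) < |ω| := by linarith
      calc |Real.sin (ω*x+φ)| / |ω| ≤ 1 / |ω| := by gcongr; exact Real.abs_sin_le_one _
        _ ≤ 1 := by rw [div_le_one hω1]; exact hω
    have hb0 : ∀ x ∈ Set.Ici (1:ℝ), |h 0 x| ≤ B := hbd 0 (Nat.succ_pos r)
    rw [hIBP, hre]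
    have e1 : |h 0 M * v M| ≤ B := by
      rw [abs_mul]
      calc |h 0 M| * |v M| ≤ B * 1 := by
            apply mul_le_mul (hb0 M (Set.mem_Ici.mpr hM)) (hvb M) (abs_nonneg _) hB
        _ = B := mul_one B
    have e2 : |h 0 1 * v 1| ≤ B := by
      rw [abs_mul]
      calc |h 0 1| * |v 1| ≤ B * 1 := by
            apply mul_le_mul (hb0 1 (Set.mem_Ici.mpr le_rfl)) (hvb 1) (abs_nonneg _) hB
        _ = B := mul_one B
    have e3 : |(∫ x in (1:ℝ)..M, h 1 x * Real.cos (ω*x + (φ - π/2))) / ω| ≤ 2*B*r + A := by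
      rw [abs_div]
      have hω1 : (0:ℝ) < |ω| := by linarith
      have hnn : (0:ℝ) ≤ 2*B*r + A := by positivity
      calc |∫ x in (1:ℝ)..M, h 1 x * Real.cos (ω*x + (φ - π/2))| / |ω|
          ≤ (2*B*r + A) / |ω| := by gcongr
        _ ≤ 2*B*r + A := by
            rw [div_le_iff₀ hω1]
            nlinarith
    push_cast
    calc |h 0 M * v M - h 0 1 * v 1 - (∫ x in (1:ℝ)..M, h 1 x * Real.cos (ω*x + (φ - π/2))) / ω|
        ≤ |h 0 M * v M| + |h 0 1 * v 1| + |(∫ x in (1:ℝ)..M, h 1 x * Real.cos (ω*x + (φ - π/2))) / ω| :=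
          abs_sub3 _ _ _
      _ ≤ B + B + (2*B*r + A) := by linarith
      _ = 2*B*(r+1) + A := by ring

/-- Kernel (periodic Bernoulli-2) oscillatory integral bound. -/
lemma oscB (r : ℕ) (h : ℕ → ℝ → ℝ) (B A : ℝ) (hB : 0 ≤ B) (hA : 0 ≤ A)
    (hder : ∀ s < r, ∀ x ∈ Set.Ici (1:ℝ), HasDerivAt (h s) (h (s+1) x) x)
    (hbd : ∀ s < r, ∀ x ∈ Set.Ici (1:ℝ), |h s x| ≤ B)
    (hct : ContinuousOn (h r) (Set.Ici (1:ℝ)))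
    (hin : IntegrableOn (fun x => |h r x|) (Set.Ici (1:ℝ)))
    (hAr : (∫ x in Set.Ici (1:ℝ), |h r x|) ≤ A)
    (k φ M : ℝ) (hk : 0 < k) (hkπ : k ≤ π) (hM : 1 ≤ M) :
    |∫ x in (1:ℝ)..M, (Int.fract x ^ 2 - Int.fract x + 1/6) * (h 0 x * Real.cos (k*x + φ))|
      ≤ (∑' n : ℕ, 1/(n:ℝ)^2) * (2*B*r + A) / π^2 := by
  have hπ : (1:ℝ) ≤ π := by linarith [Real.pi_gt_three]
  have hc0 : ContinuousOn (h 0) (Set.Ici 1) := by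
    rcases Nat.eq_zero_or_pos r with hr | hr
    · subst hr; exact hct
    · exact fun x hx => ((hder 0 hr x hx).continuousAt).continuousWithinAt
  have hc0' : ContinuousOn (h 0) (Set.Icc 1 M) := hc0.mono Set.Icc_subset_Ici_self
  have hIcc : Set.uIcc (1:ℝ) M = Set.Icc 1 M := Set.uIcc_of_le hM
  set μ := volume.restrict (Set.Ioc (1:ℝ) M) with hμ
  set F : ℕ → ℝ → ℝ := fun n x =>
    (1/(n:ℝ)^2 * Real.cos (2*π*n*x)) * (h 0 x * Real.cos (k*x+φ)) with hF
  have hFx : ∀ x : ℝ, HasSum (fun n => F n x)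
      ((π^2 * ((Int.fract x)^2 - Int.fract x + 1/6)) * (h 0 x * Real.cos (k*x+φ))) :=
    fun x => (hasSum_cos_fract x).mul_right _
  have hFcont : ∀ n : ℕ, ContinuousOn (F n) (Set.Icc 1 M) := by
    intro n
    exact ((continuous_const.mul (Real.continuous_cos.comp (by fun_prop))).continuousOn.mul
      (hc0'.mul (Real.continuous_cos.comp (by fun_prop)).continuousOn))
  have hF_int : ∀ n : ℕ, Integrable (F n) μ := by
    intro n
    rw [hμ, ← IntegrableOn]
    exact ((hFcont n).integrableOn_Icc).mono_set Set.Ioc_subset_Icc_self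
  have hD0int : Integrable (fun x => |h 0 x|) μ := by
    rw [hμ, ← IntegrableOn]
    exact (hc0'.abs.integrableOn_Icc).mono_set Set.Ioc_subset_Icc_self
  set D0 := ∫ x, |h 0 x| ∂μ with hD0
  have hF_norm : ∀ n : ℕ, (∫ x, ‖F n x‖ ∂μ) ≤ (1/(n:ℝ)^2) * D0 := by
    intro n
    have hpt : ∀ x, ‖F n x‖ ≤ (1/(n:ℝ)^2) * |h 0 x| := by
      intro x
      rw [Real.norm_eq_abs, hF]
      simp only
      rw [abs_mul, abs_mul, abs_mul]
      have h1 : |1/(n:ℝ)^2| = 1/(n:ℝ)^2 := abs_of_nonneg (by positivity)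
      rw [h1]
      have : |1/(n:ℝ)^2| * |Real.cos (2*π*n*x)| ≤ 1/(n:ℝ)^2 * 1 := by
        rw [h1]; gcongr; exact Real.abs_cos_le_one _
      calc 1/(n:ℝ)^2 * |Real.cos (2*π*n*x)| * (|h 0 x| * |Real.cos (k*x+φ)|)
          ≤ 1/(n:ℝ)^2 * 1 * (|h 0 x| * 1) := by
            gcongr <;> [exact Real.abs_cos_le_one _; exact Real.abs_cos_le_one _]
        _ = (1/(n:ℝ)^2) * |h 0 x| := by ring
    calc (∫ x, ‖F n x‖ ∂μ) ≤ ∫ x, (1/(n:ℝ)^2) * |h 0 x| ∂μ :=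
          integral_mono ((hF_int n).norm) (hD0int.const_mul _) hpt
      _ = (1/(n:ℝ)^2) * D0 := by rw [hD0, MeasureTheory.integral_const_mul]
  have hSsum : Summable (fun n : ℕ => 1/(n:ℝ)^2) :=
    summable_one_div_nat_pow.mpr one_lt_two
  have hD0nn : 0 ≤ D0 := integral_nonneg (fun x => abs_nonneg _)
  have hF_sum : Summable (fun n => ∫ x, ‖F n x‖ ∂μ) := by
    apply Summable.of_nonneg_of_le (fun n => integral_nonneg (fun x => norm_nonneg _)) hF_norm
    exact hSsum.mul_right D0
  have hHS := MeasureTheory.hasSum_integral_of_summable_integral_norm hF_int hF_sum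
  set T := ∫ x in (1:ℝ)..M, (Int.fract x ^ 2 - Int.fract x + 1/6) * (h 0 x * Real.cos (k*x + φ))
    with hT
  have hTμ : T = ∫ x, (Int.fract x ^ 2 - Int.fract x + 1/6) * (h 0 x * Real.cos (k*x + φ)) ∂μ := by
    rw [hT, intervalIntegral.integral_of_le hM, hμ]
  have hval : (∫ x, (∑' n, F n x) ∂μ) = π^2 * T := by
    rw [hTμ, ← MeasureTheory.integral_const_mul]
    refine MeasureTheory.integral_congr_ae (Filter.Eventually.of_forall (fun x => ?_))
    show (∑' (n : ℕ), F n x) = π ^ 2 * ((Int.fract x ^ 2 - Int.fract x + 1/6) * (h 0 x * Real.cos (k*x+φ)))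
    rw [(hFx x).tsum_eq]
    ring
  rw [hval] at hHS
  -- per-n bound on the integrals
  have hbnd : ∀ n : ℕ, |∫ x, F n x ∂μ| ≤ (1/(n:ℝ)^2) * (2*B*r + A) := by
    intro n
    rcases Nat.eq_zero_or_pos n with hn | hn
    · subst hn
      have : F 0 = fun _ => 0 := by
        funext x; norm_num [hF]
      rw [this]
      simp
    · -- rewrite F n using product-to-sum
      have hωa : 1 ≤ |2*π*n - k| := by
        have h2 : (1:ℝ) ≤ (n:ℝ) := by exact_mod_cast hn
        have : 2*π*n - k ≥ π := by nlinarith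
        rw [abs_of_nonneg (by linarith)]; linarith
      have hωb : 1 ≤ |2*π*n + k| := by
        have h2 : (1:ℝ) ≤ (n:ℝ) := by exact_mod_cast hn
        rw [abs_of_nonneg (by nlinarith)]; nlinarith
      have hptw : ∀ x : ℝ, F n x = (1/(2*(n:ℝ)^2)) * (h 0 x * Real.cos ((2*π*n - k)*x + (-φ)))
          + (1/(2*(n:ℝ)^2)) * (h 0 x * Real.cos ((2*π*n + k)*x + φ)) := by
        intro x
        rw [hF]
        simp only
        rw [show (2*π*↑n-k)*x + (-φ) = 2*π*↑n*x - (k*x+φ) from by ring,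
          show (2*π*↑n+k)*x + φ = 2*π*↑n*x + (k*x+φ) from by ring,
          Real.cos_sub (2*π*↑n*x) (k*x+φ), Real.cos_add (2*π*↑n*x) (k*x+φ)]
        ring
      have hI1 : IntervalIntegrable (fun x => h 0 x * Real.cos ((2*π*n - k)*x + (-φ))) volume 1 M := by
        apply ContinuousOn.intervalIntegrable; rw [hIcc]
        exact hc0'.mul (Real.continuous_cos.comp (by fun_prop)).continuousOn
      have hI2 : IntervalIntegrable (fun x => h 0 x * Real.cos ((2*π*n + k)*x + φ)) volume 1 M := by
        apply ContinuousOn.intervalIntegrable; rw [hIcc]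
        exact hc0'.mul (Real.continuous_cos.comp (by fun_prop)).continuousOn
      have hsplit : (∫ x, F n x ∂μ)
          = (1/(2*(n:ℝ)^2)) * (∫ x in (1:ℝ)..M, h 0 x * Real.cos ((2*π*n - k)*x + (-φ)))
          + (1/(2*(n:ℝ)^2)) * (∫ x in (1:ℝ)..M, h 0 x * Real.cos ((2*π*n + k)*x + φ)) := by
        rw [hμ, ← intervalIntegral.integral_of_le hM]
        rw [intervalIntegral.integral_congr (g := fun x =>
            (1/(2*(n:ℝ)^2)) * (h 0 x * Real.cos ((2*π*n - k)*x + (-φ)))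
            + (1/(2*(n:ℝ)^2)) * (h 0 x * Real.cos ((2*π*n + k)*x + φ))) (fun x _ => hptw x)]
        rw [intervalIntegral.integral_add (hI1.const_mul _) (hI2.const_mul _),
          intervalIntegral.integral_const_mul, intervalIntegral.integral_const_mul]
      have hb1 := oscA r h B A hB hA hder hbd hct hin hAr (2*π*n - k) (-φ) M hωa hM
      have hb2 := oscA r h B A hB hA hder hbd hct hin hAr (2*π*n + k) φ M hωb hM
      rw [hsplit]
      have hcn : (0:ℝ) < (n:ℝ)^2 := by positivity
      calc |(1/(2*(n:ℝ)^2)) * (∫ x in (1:ℝ)..M, h 0 x * Real.cos ((2*π*n - k)*x + (-φ)))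
          + (1/(2*(n:ℝ)^2)) * (∫ x in (1:ℝ)..M, h 0 x * Real.cos ((2*π*n + k)*x + φ))|
          ≤ |(1/(2*(n:ℝ)^2)) * (∫ x in (1:ℝ)..M, h 0 x * Real.cos ((2*π*n - k)*x + (-φ)))|
          + |(1/(2*(n:ℝ)^2)) * (∫ x in (1:ℝ)..M, h 0 x * Real.cos ((2*π*n + k)*x + φ))| :=
            abs_add_le _ _
        _ ≤ (1/(2*(n:ℝ)^2)) * (2*B*r + A) + (1/(2*(n:ℝ)^2)) * (2*B*r + A) := by
            rw [abs_mul, abs_mul, abs_of_nonneg (by positivity : (0:ℝ) ≤ 1/(2*(n:ℝ)^2))]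
            gcongr
        _ = (1/(n:ℝ)^2) * (2*B*r + A) := by field_simp; ring
  -- conclude
  have hsummable : Summable (fun n => ∫ x, F n x ∂μ) := hHS.summable
  have habs : |∑' n, ∫ x, F n x ∂μ| ≤ (∑' n : ℕ, 1/(n:ℝ)^2) * (2*B*r + A) := by
    have hs2 : Summable (fun n => ‖∫ x, F n x ∂μ‖) := by
      simpa [Real.norm_eq_abs] using hsummable.abs
    have h1 : |∑' n, ∫ x, F n x ∂μ| ≤ ∑' n, |∫ x, F n x ∂μ| := by
      have := norm_tsum_le_tsum_norm hs2
      simpa [Real.norm_eq_abs] using this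
    have h2 : ∑' n, |∫ x, F n x ∂μ| ≤ ∑' n : ℕ, (1/(n:ℝ)^2) * (2*B*r + A) :=
      Summable.tsum_le_tsum hbnd hsummable.abs (hSsum.mul_right _)
    rw [tsum_mul_right] at h2
    linarith
  have hπ2 : (0:ℝ) < π^2 := by positivity
  have hTeq : T = (∑' n, ∫ x, F n x ∂μ) / π^2 := by
    rw [hHS.tsum_eq]; field_simp
  rw [hTeq, abs_div, abs_of_nonneg hπ2.le]
  gcongr

lemma fract_eq_on (l : ℕ) (x : ℝ) (h1 : (l:ℝ) < x) (h2 : x < (l:ℝ)+1) :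
    Int.fract x = x - (l:ℝ) := by
  have hfl : ⌊x⌋ = (l:ℤ) := by
    rw [Int.floor_eq_iff]
    constructor
    · push_cast; linarith
    · push_cast; linarith
  rw [Int.fract, hfl]
  push_cast; ring

lemma ae_ne_pt (c : ℝ) : ∀ᵐ (x:ℝ) ∂(volume), x ≠ c := by
  rw [MeasureTheory.ae_iff]
  simpa [not_not, Set.setOf_eq_eq_singleton] using measure_singleton c

lemma fract_half_bound (x : ℝ) : |Int.fract x - 1/2| ≤ 1 := by
  have h1 := Int.fract_nonneg x
  have h2 := Int.fract_lt_one x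
  rw [abs_le]; constructor <;> linarith

lemma fract_quad_bound (x : ℝ) : |((Int.fract x)^2 - Int.fract x)/2| ≤ 1 := by
  have h1 := Int.fract_nonneg x
  have h2 := Int.fract_lt_one x
  have h3 : (Int.fract x)^2 ≤ 1 := by nlinarith
  have h4 : 0 ≤ (Int.fract x)^2 := sq_nonneg _
  rw [abs_le]; constructor <;> [nlinarith; nlinarith]

lemma fract_quad_meas : Measurable (fun x : ℝ => ((Int.fract x)^2 - Int.fract x)/2) :=
  (((measurable_fract.pow_const 2).sub measurable_fract).div_const 2)

lemma fract_half_meas : Measurable (fun x : ℝ => Int.fract x - 1/2) :=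
  measurable_fract.sub_const _

/-- per-interval first IBP -/
lemma S1 (l : ℕ) (hl : 1 ≤ l) (w w1 : ℝ → ℝ)
    (hw : ∀ x ∈ Set.Ici (1:ℝ), HasDerivAt w (w1 x) x)
    (hw1 : ContinuousOn w1 (Set.Ici 1)) :
    ∫ x in (l:ℝ)..((l:ℝ)+1), (Int.fract x - 1/2) * w1 x
      = (w l + w ((l:ℝ)+1))/2 - ∫ x in (l:ℝ)..((l:ℝ)+1), w x := by
  have hl1 : (1:ℝ) ≤ (l:ℝ) := by exact_mod_cast hl
  have hle : (l:ℝ) ≤ (l:ℝ)+1 := by linarith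
  have hIcc : Set.uIcc (l:ℝ) ((l:ℝ)+1) = Set.Icc (l:ℝ) ((l:ℝ)+1) := Set.uIcc_of_le hle
  have hsub : Set.Icc (l:ℝ) ((l:ℝ)+1) ⊆ Set.Ici 1 := fun x hx => le_trans hl1 hx.1
  have hwc : ContinuousOn w (Set.Ici 1) := fun x hx => ((hw x hx).continuousAt).continuousWithinAt
  -- IBP with polynomial P' x = x - l - 1/2
  have hP' : ∀ x : ℝ, HasDerivAt (fun x => x - (l:ℝ) - 1/2) 1 x := by
    intro x
    simpa using ((hasDerivAt_id x).sub_const (l:ℝ)).sub_const (1/2:ℝ)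
  have hIBP := intervalIntegral.integral_mul_deriv_eq_deriv_mul
    (a := (l:ℝ)) (b := (l:ℝ)+1)
    (u := fun x => x - (l:ℝ) - 1/2) (u' := fun _ => 1) (v := w) (v' := w1)
    (fun x _ => hP' x)
    (fun x hx => hw x (hsub (hIcc ▸ hx)))
    (by apply ContinuousOn.intervalIntegrable; exact continuousOn_const)
    (by apply ContinuousOn.intervalIntegrable; rw [hIcc]; exact hw1.mono hsub)
  have hcong : ∫ x in (l:ℝ)..((l:ℝ)+1), (Int.fract x - 1/2) * w1 x
      = ∫ x in (l:ℝ)..((l:ℝ)+1), (x - (l:ℝ) - 1/2) * w1 x := by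
    rw [intervalIntegral.integral_of_le hle, intervalIntegral.integral_of_le hle]
    apply MeasureTheory.setIntegral_congr_ae measurableSet_Ioc
    filter_upwards [ae_ne_pt ((l:ℝ)+1)] with x hx hxs
    have hx2 : x < (l:ℝ)+1 := lt_of_le_of_ne hxs.2 hx
    rw [fract_eq_on l x hxs.1 hx2]
  rw [hcong, hIBP]
  have : ∫ x in (l:ℝ)..((l:ℝ)+1), (1:ℝ) * w x = ∫ x in (l:ℝ)..((l:ℝ)+1), w x := by
    apply intervalIntegral.integral_congr; intro x _; ring
  rw [this]
  ring

/-- per-interval second IBP -/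
lemma S2 (l : ℕ) (hl : 1 ≤ l) (w w1 : ℝ → ℝ)
    (hw : ∀ x ∈ Set.Ici (1:ℝ), HasDerivAt w (w1 x) x)
    (hw1 : ContinuousOn w1 (Set.Ici 1)) :
    ∫ x in (l:ℝ)..((l:ℝ)+1), (Int.fract x - 1/2) * w x
      = - ∫ x in (l:ℝ)..((l:ℝ)+1), (((Int.fract x)^2 - Int.fract x)/2) * w1 x := by
  have hl1 : (1:ℝ) ≤ (l:ℝ) := by exact_mod_cast hl
  have hle : (l:ℝ) ≤ (l:ℝ)+1 := by linarith
  have hIcc : Set.uIcc (l:ℝ) ((l:ℝ)+1) = Set.Icc (l:ℝ) ((l:ℝ)+1) := Set.uIcc_of_le hle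
  have hsub : Set.Icc (l:ℝ) ((l:ℝ)+1) ⊆ Set.Ici 1 := fun x hx => le_trans hl1 hx.1
  have hwc : ContinuousOn w (Set.Ici 1) := fun x hx => ((hw x hx).continuousAt).continuousWithinAt
  have hP : ∀ x : ℝ, HasDerivAt (fun x => ((x - (l:ℝ))^2 - (x - (l:ℝ)))/2) (x - (l:ℝ) - 1/2) x := by
    intro x
    have h1 : HasDerivAt (fun x : ℝ => x - (l:ℝ)) 1 x := by
      simpa using (hasDerivAt_id x).sub_const (l:ℝ)
    have h2 : HasDerivAt (fun x : ℝ => (x - (l:ℝ))^2) (2*(x - (l:ℝ))) x := by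
      have := h1.fun_pow 2
      simpa using this
    have h3 := (h2.fun_sub h1).div_const 2
    rw [show x - (l:ℝ) - 1/2 = (2*(x - (l:ℝ)) - 1)/2 by ring]
    exact h3
  have hIBP := intervalIntegral.integral_mul_deriv_eq_deriv_mul
    (a := (l:ℝ)) (b := (l:ℝ)+1)
    (u := fun x => ((x - (l:ℝ))^2 - (x - (l:ℝ)))/2) (u' := fun x => x - (l:ℝ) - 1/2)
    (v := w) (v' := w1)
    (fun x _ => hP x)
    (fun x hx => hw x (hsub (hIcc ▸ hx)))
    (by apply ContinuousOn.intervalIntegrable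
        exact (by fun_prop : Continuous (fun x : ℝ => x - (l:ℝ) - 1/2)).continuousOn)
    (by apply ContinuousOn.intervalIntegrable; rw [hIcc]; exact hw1.mono hsub)
  have hcong1 : ∫ x in (l:ℝ)..((l:ℝ)+1), (Int.fract x - 1/2) * w x
      = ∫ x in (l:ℝ)..((l:ℝ)+1), (x - (l:ℝ) - 1/2) * w x := by
    rw [intervalIntegral.integral_of_le hle, intervalIntegral.integral_of_le hle]
    apply MeasureTheory.setIntegral_congr_ae measurableSet_Ioc
    filter_upwards [ae_ne_pt ((l:ℝ)+1)] with x hx hxs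
    have hx2 : x < (l:ℝ)+1 := lt_of_le_of_ne hxs.2 hx
    rw [fract_eq_on l x hxs.1 hx2]
  have hcong2 : ∫ x in (l:ℝ)..((l:ℝ)+1), (((Int.fract x)^2 - Int.fract x)/2) * w1 x
      = ∫ x in (l:ℝ)..((l:ℝ)+1), (((x - (l:ℝ))^2 - (x - (l:ℝ)))/2) * w1 x := by
    rw [intervalIntegral.integral_of_le hle, intervalIntegral.integral_of_le hle]
    apply MeasureTheory.setIntegral_congr_ae measurableSet_Ioc
    filter_upwards [ae_ne_pt ((l:ℝ)+1)] with x hx hxs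
    have hx2 : x < (l:ℝ)+1 := lt_of_le_of_ne hxs.2 hx
    rw [fract_eq_on l x hxs.1 hx2]
  rw [hcong1, hcong2]
  have hIBP2 : ∫ x in (l:ℝ)..((l:ℝ)+1), (((x - (l:ℝ))^2 - (x - (l:ℝ)))/2) * w1 x
      = (((((l:ℝ)+1) - (l:ℝ))^2 - (((l:ℝ)+1) - (l:ℝ)))/2) * w ((l:ℝ)+1)
        - ((((l:ℝ) - (l:ℝ))^2 - ((l:ℝ) - (l:ℝ)))/2) * w (l:ℝ)
        - ∫ x in (l:ℝ)..((l:ℝ)+1), (x - (l:ℝ) - 1/2) * w x := hIBP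
  rw [hIBP2]
  norm_num

lemma II_fract_half (w : ℝ → ℝ) (a b : ℝ) (hab : a ≤ b) (hw : ContinuousOn w (Set.Icc a b)) :
    IntervalIntegrable (fun x => (Int.fract x - 1/2) * w x) volume a b :=
  II_bdd_mul _ w a b hab fract_half_meas 1 fract_half_bound hw

lemma II_fract_quad (w : ℝ → ℝ) (a b : ℝ) (hab : a ≤ b) (hw : ContinuousOn w (Set.Icc a b)) :
    IntervalIntegrable (fun x => (((Int.fract x)^2 - Int.fract x)/2) * w x) volume a b :=
  II_bdd_mul _ w a b hab fract_quad_meas 1 fract_quad_bound hw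

/-- Stage 1: trapezoid-rule Euler-Maclaurin at first order. -/
lemma stage1 (w w1 : ℝ → ℝ)
    (hw : ∀ x ∈ Set.Ici (1:ℝ), HasDerivAt w (w1 x) x)
    (hw1 : ContinuousOn w1 (Set.Ici 1)) :
    ∀ M : ℕ, 1 ≤ M → ∑ l ∈ Finset.Icc 1 M, w l
      = w 1 / 2 + w M / 2 + (∫ x in (1:ℝ)..(M:ℝ), w x)
        + ∫ x in (1:ℝ)..(M:ℝ), (Int.fract x - 1/2) * w1 x := by
  have hwc : ContinuousOn w (Set.Ici 1) := fun x hx => ((hw x hx).continuousAt).continuousWithinAt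
  intro M hM
  induction M, hM using Nat.le_induction with
  | base => simp
  | succ N hN ih =>
    have hN1 : (1:ℝ) ≤ (N:ℝ) := by exact_mod_cast hN
    have hsub1 : Set.Icc (1:ℝ) (N:ℝ) ⊆ Set.Ici 1 := fun x hx => hx.1
    have hsub2 : Set.Icc (N:ℝ) ((N:ℝ)+1) ⊆ Set.Ici 1 := fun x hx => le_trans hN1 hx.1
    have hIw1 : IntervalIntegrable w volume 1 (N:ℝ) := by
      apply ContinuousOn.intervalIntegrable
      rw [Set.uIcc_of_le hN1]; exact hwc.mono hsub1
    have hIw2 : IntervalIntegrable w volume (N:ℝ) ((N:ℝ)+1) := by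
      apply ContinuousOn.intervalIntegrable
      rw [Set.uIcc_of_le (by linarith)]; exact hwc.mono hsub2
    have hIf1 : IntervalIntegrable (fun x => (Int.fract x - 1/2) * w1 x) volume 1 (N:ℝ) :=
      II_fract_half w1 1 (N:ℝ) hN1 (hw1.mono hsub1)
    have hIf2 : IntervalIntegrable (fun x => (Int.fract x - 1/2) * w1 x) volume (N:ℝ) ((N:ℝ)+1) :=
      II_fract_half w1 (N:ℝ) ((N:ℝ)+1) (by linarith) (hw1.mono hsub2)
    have hadd1 := intervalIntegral.integral_add_adjacent_intervals hIw1 hIw2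
    have hadd2 := intervalIntegral.integral_add_adjacent_intervals hIf1 hIf2
    have hS1 := S1 N hN w w1 hw hw1
    rw [Finset.sum_Icc_succ_top (by omega : 1 ≤ N + 1), ih]
    push_cast
    rw [← hadd1, ← hadd2, hS1]
    ring

/-- Stage 2: moving one more derivative onto the periodic kernel. -/
lemma stage2 (w w1 : ℝ → ℝ)
    (hw : ∀ x ∈ Set.Ici (1:ℝ), HasDerivAt w (w1 x) x)
    (hw1 : ContinuousOn w1 (Set.Ici 1)) :
    ∀ M : ℕ, 1 ≤ M →
      (∫ x in (1:ℝ)..(M:ℝ), (Int.fract x - 1/2) * w x)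
        = - ∫ x in (1:ℝ)..(M:ℝ), (((Int.fract x)^2 - Int.fract x)/2) * w1 x := by
  have hwc : ContinuousOn w (Set.Ici 1) := fun x hx => ((hw x hx).continuousAt).continuousWithinAt
  intro M hM
  induction M, hM using Nat.le_induction with
  | base => simp
  | succ N hN ih =>
    have hN1 : (1:ℝ) ≤ (N:ℝ) := by exact_mod_cast hN
    have hsub1 : Set.Icc (1:ℝ) (N:ℝ) ⊆ Set.Ici 1 := fun x hx => hx.1
    have hsub2 : Set.Icc (N:ℝ) ((N:ℝ)+1) ⊆ Set.Ici 1 := fun x hx => le_trans hN1 hx.1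
    have hIf1 : IntervalIntegrable (fun x => (Int.fract x - 1/2) * w x) volume 1 (N:ℝ) :=
      II_fract_half w 1 (N:ℝ) hN1 (hwc.mono hsub1)
    have hIf2 : IntervalIntegrable (fun x => (Int.fract x - 1/2) * w x) volume (N:ℝ) ((N:ℝ)+1) :=
      II_fract_half w (N:ℝ) ((N:ℝ)+1) (by linarith) (hwc.mono hsub2)
    have hIq1 : IntervalIntegrable (fun x => (((Int.fract x)^2 - Int.fract x)/2) * w1 x) volume 1 (N:ℝ) :=
      II_fract_quad w1 1 (N:ℝ) hN1 (hw1.mono hsub1)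
    have hIq2 : IntervalIntegrable (fun x => (((Int.fract x)^2 - Int.fract x)/2) * w1 x) volume (N:ℝ) ((N:ℝ)+1) :=
      II_fract_quad w1 (N:ℝ) ((N:ℝ)+1) (by linarith) (hw1.mono hsub2)
    have hadd1 := intervalIntegral.integral_add_adjacent_intervals hIf1 hIf2
    have hadd2 := intervalIntegral.integral_add_adjacent_intervals hIq1 hIq2
    have hS2 := S2 N hN w w1 hw hw1
    push_cast
    rw [← hadd1, ← hadd2, ih, hS2]
    ring

/-- Euler–Maclaurin control of the pairing function (Theorem 2 / Appendix E):
if `κ` is `(2Q+1)`-times continuously differentiable on `[1,∞)` (the family `κd q`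
of successive derivatives, `κd 0 = κ`), with `κd q` bounded on `[1,∞)` for
`0 ≤ q ≤ 2Q` and `κd (2Q+1)` absolutely integrable on `[1,∞)`, then there is a
constant `C > 0` such that for all integers `M ≥ 1` and all `k ∈ (0, π]`,
`|∑_{l=1}^M κ(l) sin(kl) − ∫_1^M κ(x) sin(kx) dx| ≤ C`. -/
theorem stmt_10 (Q : ℕ) (κ : ℝ → ℝ) (κd : ℕ → ℝ → ℝ) (hκ0 : κd 0 = κ)
    (hderiv : ∀ q < 2 * Q + 1, ∀ x ∈ Set.Ici (1 : ℝ),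
      HasDerivAt (κd q) (κd (q + 1) x) x)
    (hconttop : ContinuousOn (κd (2 * Q + 1)) (Set.Ici (1 : ℝ)))
    (hbdd : ∀ q ≤ 2 * Q, ∃ B : ℝ, ∀ x ∈ Set.Ici (1 : ℝ), |κd q x| ≤ B)
    (hint : IntegrableOn (fun x => |κd (2 * Q + 1) x|) (Set.Ici (1 : ℝ))) :
    ∃ C : ℝ, 0 < C ∧ ∀ M : ℕ, 1 ≤ M → ∀ k ∈ Set.Ioc (0 : ℝ) Real.pi,
      |(∑ l ∈ Finset.Icc 1 M, κ (l : ℝ) * Real.sin (k * l)) -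
          ∫ x in (1 : ℝ)..(M : ℝ), κ x * Real.sin (k * x)| ≤ C := by
  subst hκ0
  classical
  -- uniform bound B
  set b : ℕ → ℝ := fun q => if h : q ≤ 2*Q then Classical.choose (hbdd q h) else 0 with hbdef
  have hbspec : ∀ q (h : q ≤ 2*Q), ∀ x ∈ Set.Ici (1:ℝ), |κd q x| ≤ b q := by
    intro q h x hx
    rw [hbdef]
    simp only [dif_pos h]
    exact Classical.choose_spec (hbdd q h) x hx
  set B : ℝ := ∑ q ∈ Finset.range (2*Q+1), max (b q) 0 with hBdef
  have hB0 : 0 ≤ B := Finset.sum_nonneg (fun q _ => le_max_right _ _)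
  have hBq : ∀ q, q ≤ 2*Q → ∀ x ∈ Set.Ici (1:ℝ), |κd q x| ≤ B := by
    intro q hq x hx
    calc |κd q x| ≤ b q := hbspec q hq x hx
      _ ≤ max (b q) 0 := le_max_left _ _
      _ ≤ B := Finset.single_le_sum (f := fun q => max (b q) 0)
          (fun i _ => le_max_right _ _) (Finset.mem_range.mpr (by omega))
  set A : ℝ := ∫ x in Set.Ici (1:ℝ), |κd (2*Q+1) x| with hAdef
  have hA0 : 0 ≤ A := MeasureTheory.integral_nonneg (fun x => abs_nonneg _)
  have hAr : (∫ x in Set.Ici (1:ℝ), |κd (2*Q+1) x|) ≤ A := le_of_eq hAdef.symm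
  set S : ℝ := ∑' n : ℕ, 1/(n:ℝ)^2 with hSdef
  have hS0 : 0 ≤ S := tsum_nonneg (fun n => by positivity)
  have hπ1 : (1:ℝ) ≤ Real.pi := by linarith [Real.pi_gt_three]
  have hπ0 : (0:ℝ) < Real.pi := by linarith
  -- continuity of all κd q, q ≤ 2Q+1
  have hconts : ∀ q, q ≤ 2*Q+1 → ContinuousOn (κd q) (Set.Ici (1:ℝ)) := by
    intro q hq
    rcases eq_or_lt_of_le hq with h | h
    · rw [h]; exact hconttop
    · exact fun x hx => ((hderiv q h x hx).continuousAt).continuousWithinAt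
  rcases Nat.eq_zero_or_pos Q with hQ0 | hQpos
  · -- ===================== case Q = 0 =====================
    subst hQ0
    set c0 : ℝ := B + A + Real.pi*((1/2)*((S*(2*B*0+A)/Real.pi^2)
        + Real.pi*(S*(2*B*1+A)/Real.pi^2)) + (1/12)*(2*B)) with hc0def
    refine ⟨1 + |c0|, by positivity, ?_⟩
    intro M hM k hk
    obtain ⟨hk0, hkπ⟩ := hk
    have hM1 : (1:ℝ) ≤ (M:ℝ) := by exact_mod_cast hM
    have hIccM : Set.uIcc (1:ℝ) (M:ℝ) = Set.Icc 1 (M:ℝ) := Set.uIcc_of_le hM1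
    have hsubM : Set.Icc (1:ℝ) (M:ℝ) ⊆ Set.Ici 1 := fun x hx => hx.1
    -- derivative setup
    have hkx : ∀ x : ℝ, HasDerivAt (fun x => k*x) k x := fun x => by
      simpa using (hasDerivAt_id x).const_mul k
    have hsin : ∀ x : ℝ, HasDerivAt (fun x => Real.sin (k*x)) (Real.cos (k*x) * k) x :=
      fun x => (hkx x).sin
    have hcos : ∀ x : ℝ, HasDerivAt (fun x => Real.cos (k*x)) (-Real.sin (k*x) * k) x :=
      fun x => (hkx x).cos
    set g : ℝ → ℝ := fun x => κd 0 x * Real.sin (k*x) with hgdef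
    set g1 : ℝ → ℝ := fun x => κd 1 x * Real.sin (k*x) + κd 0 x * (Real.cos (k*x) * k)
      with hg1def
    have hg : ∀ x ∈ Set.Ici (1:ℝ), HasDerivAt g (g1 x) x := fun x hx =>
      (hderiv 0 (by omega) x hx).mul (hsin x)
    have hc0cont : ContinuousOn (κd 0) (Set.Ici (1:ℝ)) := hconts 0 (by omega)
    have hc1cont : ContinuousOn (κd 1) (Set.Ici (1:ℝ)) := hconts 1 (by omega)
    have hg1cont : ContinuousOn g1 (Set.Ici (1:ℝ)) := by
      apply ContinuousOn.add
      · exact hc1cont.mul (Real.continuous_sin.comp (by fun_prop)).continuousOn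
      · exact hc0cont.mul ((Real.continuous_cos.comp (by fun_prop)).mul continuous_const).continuousOn
    -- stage 1
    have hstage1 := stage1 g g1 hg hg1cont M hM
    -- split E
    set w : ℝ → ℝ := fun x => κd 0 x * Real.cos (k*x) with hwdef
    set w1 : ℝ → ℝ := fun x => κd 1 x * Real.cos (k*x) + κd 0 x * (-Real.sin (k*x) * k)
      with hw1def
    have hw : ∀ x ∈ Set.Ici (1:ℝ), HasDerivAt w (w1 x) x := fun x hx =>
      (hderiv 0 (by omega) x hx).mul (hcos x)
    have hw1cont : ContinuousOn w1 (Set.Ici (1:ℝ)) := by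
      apply ContinuousOn.add
      · exact hc1cont.mul (Real.continuous_cos.comp (by fun_prop)).continuousOn
      · exact hc0cont.mul (((Real.continuous_sin.comp (by fun_prop)).neg.mul continuous_const)).continuousOn
    have hwcont : ContinuousOn w (Set.Ici (1:ℝ)) :=
      hc0cont.mul (Real.continuous_cos.comp (by fun_prop)).continuousOn
    have hE1int : IntervalIntegrable (fun x => (Int.fract x - 1/2) * (κd 1 x * Real.sin (k*x)))
        volume 1 (M:ℝ) :=
      II_fract_half _ 1 (M:ℝ) hM1
        ((hc1cont.mono hsubM).mul (Real.continuous_sin.comp (by fun_prop)).continuousOn)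
    have hE2int : IntervalIntegrable (fun x => (Int.fract x - 1/2) * (w x * k)) volume 1 (M:ℝ) :=
      II_fract_half _ 1 (M:ℝ) hM1 ((hwcont.mono hsubM).mul continuous_const.continuousOn)
    have hEsplit : (∫ x in (1:ℝ)..(M:ℝ), (Int.fract x - 1/2) * g1 x)
        = (∫ x in (1:ℝ)..(M:ℝ), (Int.fract x - 1/2) * (κd 1 x * Real.sin (k*x)))
          + k * (∫ x in (1:ℝ)..(M:ℝ), (Int.fract x - 1/2) * w x) := by
      rw [← intervalIntegral.integral_const_mul]
      rw [← intervalIntegral.integral_add hE1int (by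
        have := hE2int
        apply IntervalIntegrable.congr_ae this
        filter_upwards with x
        simp only [hwdef]
        ring)]
      apply intervalIntegral.integral_congr
      intro x _
      simp only [hg1def, hwdef]
      ring
    -- stage 2 on w
    have hstage2 := stage2 w w1 hw hw1cont M hM
    -- split the kernel integral
    set J1 : ℝ := ∫ x in (1:ℝ)..(M:ℝ),
      (Int.fract x ^ 2 - Int.fract x + 1/6) * (κd 1 x * Real.cos (k*x + 0)) with hJ1def
    set J0 : ℝ := ∫ x in (1:ℝ)..(M:ℝ),
      (Int.fract x ^ 2 - Int.fract x + 1/6) * (κd 0 x * Real.cos (k*x + -(Real.pi/2))) with hJ0def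
    have hmeasK : Measurable (fun x : ℝ => Int.fract x ^ 2 - Int.fract x + 1/6) :=
      (measurable_fract.pow_const 2).sub measurable_fract |>.add_const _
    have hKbound : ∀ x : ℝ, |Int.fract x ^ 2 - Int.fract x + 1/6| ≤ 2 := by
      intro x
      have h1 := Int.fract_nonneg x
      have h2 := Int.fract_lt_one x
      have h3 : (Int.fract x)^2 ≤ 1 := by nlinarith
      have h4 : 0 ≤ (Int.fract x)^2 := sq_nonneg _
      rw [abs_le]; constructor <;> nlinarith
    have hJ1int : IntervalIntegrable (fun x =>
        (Int.fract x ^ 2 - Int.fract x + 1/6) * (κd 1 x * Real.cos (k*x + 0))) volume 1 (M:ℝ) :=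
      II_bdd_mul _ _ 1 (M:ℝ) hM1 hmeasK 2 hKbound
        ((hc1cont.mono hsubM).mul (Real.continuous_cos.comp (by fun_prop)).continuousOn)
    have hJ0int : IntervalIntegrable (fun x =>
        (Int.fract x ^ 2 - Int.fract x + 1/6) * (κd 0 x * Real.cos (k*x + -(Real.pi/2)))) volume 1 (M:ℝ) :=
      II_bdd_mul _ _ 1 (M:ℝ) hM1 hmeasK 2 hKbound
        ((hc0cont.mono hsubM).mul (Real.continuous_cos.comp (by fun_prop)).continuousOn)
    have hKsplit : (∫ x in (1:ℝ)..(M:ℝ), (Int.fract x ^ 2 - Int.fract x + 1/6) * w1 x)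
        = J1 + (-k) * J0 := by
      rw [hJ1def, hJ0def, ← intervalIntegral.integral_const_mul,
        ← intervalIntegral.integral_add hJ1int (hJ0int.const_mul _)]
      apply intervalIntegral.integral_congr
      intro x _
      have hsc : Real.cos (k*x + -(Real.pi/2)) = Real.sin (k*x) := by
        rw [show k*x + -(Real.pi/2) = k*x - Real.pi/2 by ring, Real.cos_sub_pi_div_two]
      simp only [hw1def]
      rw [hsc, add_zero]
      ring
    -- G = K/2 - 1/12 split
    have hKw1int : IntervalIntegrable (fun x =>
        (Int.fract x ^ 2 - Int.fract x + 1/6) * w1 x) volume 1 (M:ℝ) :=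
      II_bdd_mul _ _ 1 (M:ℝ) hM1 hmeasK 2 hKbound (hw1cont.mono hsubM)
    have hw1int : IntervalIntegrable w1 volume 1 (M:ℝ) := by
      apply ContinuousOn.intervalIntegrable; rw [hIccM]; exact hw1cont.mono hsubM
    have hGsplit : (∫ x in (1:ℝ)..(M:ℝ), (((Int.fract x)^2 - Int.fract x)/2) * w1 x)
        = (1/2) * (∫ x in (1:ℝ)..(M:ℝ), (Int.fract x ^ 2 - Int.fract x + 1/6) * w1 x)
          - (1/12) * (∫ x in (1:ℝ)..(M:ℝ), w1 x) := by
      rw [← intervalIntegral.integral_const_mul, ← intervalIntegral.integral_const_mul,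
        ← intervalIntegral.integral_sub (hKw1int.const_mul _) (hw1int.const_mul _)]
      apply intervalIntegral.integral_congr
      intro x _
      ring
    have hFTC : (∫ x in (1:ℝ)..(M:ℝ), w1 x) = w (M:ℝ) - w 1 := by
      apply intervalIntegral.integral_eq_sub_of_hasDerivAt
      · intro x hx
        exact hw x (hsubM (hIccM ▸ hx))
      · exact hw1int
    -- oscB bounds
    have hbJ1 : |J1| ≤ S*(2*B*0+A)/Real.pi^2 := by
      have h1 := oscB 0 (fun s => κd (s+1)) B A hB0 hA0
        (fun s hs => absurd hs (Nat.not_lt_zero s))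
        (fun s hs => absurd hs (Nat.not_lt_zero s))
        hconttop hint hAr k 0 (M:ℝ) hk0 hkπ hM1
      rw [hJ1def, hSdef]
      exact_mod_cast h1
    have hbJ0 : |J0| ≤ S*(2*B*1+A)/Real.pi^2 := by
      have h1 := oscB 1 κd B A hB0 hA0
        (fun s hs x hx => hderiv s (by omega) x hx)
        (fun s hs x hx => hBq s (by omega) x hx)
        hconttop hint hAr k (-(Real.pi/2)) (M:ℝ) hk0 hkπ hM1
      rw [hJ0def, hSdef]
      exact_mod_cast h1
    -- E1 bound
    have hE1bd : |∫ x in (1:ℝ)..(M:ℝ), (Int.fract x - 1/2) * (κd 1 x * Real.sin (k*x))| ≤ A := by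
      have habs := intervalIntegral.abs_integral_le_integral_abs (μ := volume) (f := fun x =>
        (Int.fract x - 1/2) * (κd 1 x * Real.sin (k*x))) hM1
      have hmono : (∫ x in (1:ℝ)..(M:ℝ), |(Int.fract x - 1/2) * (κd 1 x * Real.sin (k*x))|)
          ≤ ∫ x in (1:ℝ)..(M:ℝ), |κd 1 x| := by
        apply intervalIntegral.integral_mono_on hM1 hE1int.abs
        · apply ContinuousOn.intervalIntegrable; rw [hIccM]; exact (hc1cont.mono hsubM).abs
        · intro x _
          rw [abs_mul, abs_mul]
          calc |Int.fract x - 1/2| * (|κd 1 x| * |Real.sin (k*x)|)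
              ≤ 1 * (|κd 1 x| * 1) := by
                gcongr
                · exact fract_half_bound x
                · exact Real.abs_sin_le_one _
            _ = |κd 1 x| := by ring
      have htail : (∫ x in (1:ℝ)..(M:ℝ), |κd 1 x|) ≤ A := by
        rw [intervalIntegral.integral_of_le hM1]
        refine le_trans (MeasureTheory.setIntegral_mono_set hint
          (Filter.Eventually.of_forall (fun x => abs_nonneg _))
          ((Set.Ioc_subset_Icc_self.trans Set.Icc_subset_Ici_self).eventuallyLE)) hAr
      linarith
    -- |w| and |g| bounds
    have hwbd : ∀ x ∈ Set.Ici (1:ℝ), |w x| ≤ B := by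
      intro x hx
      rw [hwdef]
      simp only
      rw [abs_mul]
      calc |κd 0 x| * |Real.cos (k*x)| ≤ B * 1 := by
            gcongr
            · exact hBq 0 (by omega) x hx
            · exact Real.abs_cos_le_one _
        _ = B := mul_one B
    have hgbd : ∀ x ∈ Set.Ici (1:ℝ), |g x| ≤ B := by
      intro x hx
      rw [hgdef]
      simp only
      rw [abs_mul]
      calc |κd 0 x| * |Real.sin (k*x)| ≤ B * 1 := by
            gcongr
            · exact hBq 0 (by omega) x hx
            · exact Real.abs_sin_le_one _
        _ = B := mul_one B
    -- assemble
    have hD : (∑ l ∈ Finset.Icc 1 M, κd 0 (l:ℝ) * Real.sin (k*(l:ℝ)))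
        - (∫ x in (1:ℝ)..(M:ℝ), κd 0 x * Real.sin (k*x))
        = g 1 / 2 + g (M:ℝ) / 2
          + (∫ x in (1:ℝ)..(M:ℝ), (Int.fract x - 1/2) * (κd 1 x * Real.sin (k*x)))
          + k * (- ((1/2) * (J1 + (-k) * J0) - (1/12) * (w (M:ℝ) - w 1))) := by
      have e0 : (∑ l ∈ Finset.Icc 1 M, κd 0 (l:ℝ) * Real.sin (k*(l:ℝ)))
          = ∑ l ∈ Finset.Icc 1 M, g (l:ℝ) := rfl
      have e1 : (∫ x in (1:ℝ)..(M:ℝ), κd 0 x * Real.sin (k*x))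
          = ∫ x in (1:ℝ)..(M:ℝ), g x := rfl
      rw [e0, e1, hstage1, hEsplit, hstage2, hGsplit, hFTC, hKsplit]
      ring
    rw [hD]
    -- final numeric bound
    have hb1 : |g 1| ≤ B := hgbd 1 (Set.mem_Ici.mpr le_rfl)
    have hb2 : |g (M:ℝ)| ≤ B := hgbd (M:ℝ) (Set.mem_Ici.mpr hM1)
    have hbw1 : |w 1| ≤ B := hwbd 1 (Set.mem_Ici.mpr le_rfl)
    have hbwM : |w (M:ℝ)| ≤ B := hwbd (M:ℝ) (Set.mem_Ici.mpr hM1)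
    have hkJ0 : |(-k) * J0| ≤ Real.pi * (S*(2*B*1+A)/Real.pi^2) := by
      rw [abs_mul, abs_neg, abs_of_pos hk0]
      apply mul_le_mul hkπ hbJ0 (abs_nonneg _) hπ0.le
    have hinner : |(- ((1/2) * (J1 + (-k) * J0) - (1/12) * (w (M:ℝ) - w 1)))|
        ≤ (1/2)*((S*(2*B*0+A)/Real.pi^2) + Real.pi*(S*(2*B*1+A)/Real.pi^2)) + (1/12)*(2*B) := by
      rw [abs_neg]
      have h1 : |(1/2) * (J1 + (-k) * J0)| ≤ (1/2)*((S*(2*B*0+A)/Real.pi^2)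
          + Real.pi*(S*(2*B*1+A)/Real.pi^2)) := by
        rw [abs_mul, abs_of_pos (by norm_num : (0:ℝ) < 1/2)]
        have := (abs_add_le J1 ((-k) * J0)).trans (add_le_add hbJ1 hkJ0)
        linarith
      have h2 : |(1/12) * (w (M:ℝ) - w 1)| ≤ (1/12)*(2*B) := by
        rw [abs_mul, abs_of_pos (by norm_num : (0:ℝ) < 1/12)]
        have : |w (M:ℝ) - w 1| ≤ 2*B := by
          have := (abs_sub (w (M:ℝ)) (w 1)).trans (add_le_add hbwM hbw1)
          linarith
        linarith
      calc |(1/2) * (J1 + (-k) * J0) - (1/12) * (w (M:ℝ) - w 1)|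
          ≤ |(1/2) * (J1 + (-k) * J0)| + |(1/12) * (w (M:ℝ) - w 1)| := by
            simpa [sub_eq_add_neg, abs_neg] using
              abs_add_le ((1/2) * (J1 + (-k) * J0)) (-((1/12) * (w (M:ℝ) - w 1)))
        _ ≤ _ := add_le_add h1 h2
    have hkE2 : |k * (- ((1/2) * (J1 + (-k) * J0) - (1/12) * (w (M:ℝ) - w 1)))|
        ≤ Real.pi*((1/2)*((S*(2*B*0+A)/Real.pi^2) + Real.pi*(S*(2*B*1+A)/Real.pi^2)) + (1/12)*(2*B)) := by
      rw [abs_mul, abs_of_pos hk0]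
      apply mul_le_mul hkπ hinner (abs_nonneg _) hπ0.le
    have hE1' := hE1bd
    calc |g 1 / 2 + g (M:ℝ) / 2
          + (∫ x in (1:ℝ)..(M:ℝ), (Int.fract x - 1/2) * (κd 1 x * Real.sin (k*x)))
          + k * (- ((1/2) * (J1 + (-k) * J0) - (1/12) * (w (M:ℝ) - w 1)))|
        ≤ |g 1 / 2 + g (M:ℝ) / 2
          + (∫ x in (1:ℝ)..(M:ℝ), (Int.fract x - 1/2) * (κd 1 x * Real.sin (k*x)))|
          + |k * (- ((1/2) * (J1 + (-k) * J0) - (1/12) * (w (M:ℝ) - w 1)))| := abs_add_le _ _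
      _ ≤ (|g 1 / 2 + g (M:ℝ) / 2|
          + |∫ x in (1:ℝ)..(M:ℝ), (Int.fract x - 1/2) * (κd 1 x * Real.sin (k*x))|)
          + |k * (- ((1/2) * (J1 + (-k) * J0) - (1/12) * (w (M:ℝ) - w 1)))| := by
            have := abs_add_le (g 1 / 2 + g (M:ℝ) / 2)
              (∫ x in (1:ℝ)..(M:ℝ), (Int.fract x - 1/2) * (κd 1 x * Real.sin (k*x)))
            linarith
      _ ≤ c0 := by
          have habs12 : |g 1 / 2 + g (M:ℝ) / 2| ≤ B := by
            have := abs_add_le (g 1 / 2) (g (M:ℝ) / 2)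
            rw [abs_div, abs_div] at this
            have h2 : |(2:ℝ)| = 2 := by norm_num
            rw [h2] at this
            linarith
          rw [hc0def]
          linarith
      _ ≤ 1 + |c0| := by
          have := le_abs_self c0
          linarith
  · -- ===================== case 1 ≤ Q =====================
    obtain ⟨Q', rfl⟩ : ∃ Q', Q = Q' + 1 := ⟨Q - 1, by omega⟩
    have e1 : 2 * (Q' + 1) + 1 = 2*Q' + 3 := by ring
    rw [e1] at hconttop hint hAdef hAr
    set c1 : ℝ := B + (1/2)*( S*(2*B*(2*Q'+1)+A)/Real.pi^2
        + 2*Real.pi*(S*(2*B*(2*Q'+2)+A)/Real.pi^2)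
        + Real.pi^2*(S*(2*B*(2*Q'+3)+A)/Real.pi^2) )
        + (1/12)*(2*(B + B*Real.pi)) with hc1def
    refine ⟨1 + |c1|, by positivity, ?_⟩
    intro M hM k hk
    obtain ⟨hk0, hkπ⟩ := hk
    have hM1 : (1:ℝ) ≤ (M:ℝ) := by exact_mod_cast hM
    have hIccM : Set.uIcc (1:ℝ) (M:ℝ) = Set.Icc 1 (M:ℝ) := Set.uIcc_of_le hM1
    have hsubM : Set.Icc (1:ℝ) (M:ℝ) ⊆ Set.Ici 1 := fun x hx => hx.1
    have hkx : ∀ x : ℝ, HasDerivAt (fun x => k*x) k x := fun x => by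
      simpa using (hasDerivAt_id x).const_mul k
    have hsin : ∀ x : ℝ, HasDerivAt (fun x => Real.sin (k*x)) (Real.cos (k*x) * k) x :=
      fun x => (hkx x).sin
    have hcos : ∀ x : ℝ, HasDerivAt (fun x => Real.cos (k*x)) (-Real.sin (k*x) * k) x :=
      fun x => (hkx x).cos
    set g : ℝ → ℝ := fun x => κd 0 x * Real.sin (k*x) with hgdef
    set g1 : ℝ → ℝ := fun x => κd 1 x * Real.sin (k*x) + κd 0 x * (Real.cos (k*x) * k)
      with hg1def
    set g2 : ℝ → ℝ := fun x => (κd 2 x * Real.sin (k*x) + κd 1 x * (Real.cos (k*x) * k))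
      + (κd 1 x * (Real.cos (k*x) * k) + κd 0 x * (-Real.sin (k*x) * k * k)) with hg2def
    have hg : ∀ x ∈ Set.Ici (1:ℝ), HasDerivAt g (g1 x) x := fun x hx =>
      (hderiv 0 (by omega) x hx).mul (hsin x)
    have hg1 : ∀ x ∈ Set.Ici (1:ℝ), HasDerivAt g1 (g2 x) x := fun x hx =>
      ((hderiv 1 (by omega) x hx).mul (hsin x)).add
        ((hderiv 0 (by omega) x hx).mul ((hcos x).mul_const k))
    have hc0cont : ContinuousOn (κd 0) (Set.Ici (1:ℝ)) := hconts 0 (by omega)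
    have hc1cont : ContinuousOn (κd 1) (Set.Ici (1:ℝ)) := hconts 1 (by omega)
    have hc2cont : ContinuousOn (κd 2) (Set.Ici (1:ℝ)) := hconts 2 (by omega)
    have hg1cont : ContinuousOn g1 (Set.Ici (1:ℝ)) := by
      apply ContinuousOn.add
      · exact hc1cont.mul (Real.continuous_sin.comp (by fun_prop)).continuousOn
      · exact hc0cont.mul ((Real.continuous_cos.comp (by fun_prop)).mul continuous_const).continuousOn
    have hg2cont : ContinuousOn g2 (Set.Ici (1:ℝ)) := by
      apply ContinuousOn.add
      · apply ContinuousOn.add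
        · exact hc2cont.mul (Real.continuous_sin.comp (by fun_prop)).continuousOn
        · exact hc1cont.mul ((Real.continuous_cos.comp (by fun_prop)).mul continuous_const).continuousOn
      · apply ContinuousOn.add
        · exact hc1cont.mul ((Real.continuous_cos.comp (by fun_prop)).mul continuous_const).continuousOn
        · exact hc0cont.mul ((((Real.continuous_sin.comp (by fun_prop)).neg.mul
            continuous_const).mul continuous_const)).continuousOn
    have hstage1 := stage1 g g1 hg hg1cont M hM
    have hstage2 := stage2 g1 g2 hg1 hg2cont M hM
    -- split kernel
    set J2 : ℝ := ∫ x in (1:ℝ)..(M:ℝ),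
      (Int.fract x ^ 2 - Int.fract x + 1/6) * (κd 2 x * Real.cos (k*x + -(Real.pi/2))) with hJ2def
    set J1 : ℝ := ∫ x in (1:ℝ)..(M:ℝ),
      (Int.fract x ^ 2 - Int.fract x + 1/6) * (κd 1 x * Real.cos (k*x + 0)) with hJ1def
    set J0 : ℝ := ∫ x in (1:ℝ)..(M:ℝ),
      (Int.fract x ^ 2 - Int.fract x + 1/6) * (κd 0 x * Real.cos (k*x + -(Real.pi/2))) with hJ0def
    have hmeasK : Measurable (fun x : ℝ => Int.fract x ^ 2 - Int.fract x + 1/6) :=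
      (measurable_fract.pow_const 2).sub measurable_fract |>.add_const _
    have hKbound : ∀ x : ℝ, |Int.fract x ^ 2 - Int.fract x + 1/6| ≤ 2 := by
      intro x
      have h1 := Int.fract_nonneg x
      have h2 := Int.fract_lt_one x
      have h3 : (Int.fract x)^2 ≤ 1 := by nlinarith
      have h4 : 0 ≤ (Int.fract x)^2 := sq_nonneg _
      rw [abs_le]; constructor <;> nlinarith
    have hJ2int : IntervalIntegrable (fun x =>
        (Int.fract x ^ 2 - Int.fract x + 1/6) * (κd 2 x * Real.cos (k*x + -(Real.pi/2)))) volume 1 (M:ℝ) :=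
      II_bdd_mul _ _ 1 (M:ℝ) hM1 hmeasK 2 hKbound
        ((hc2cont.mono hsubM).mul (Real.continuous_cos.comp (by fun_prop)).continuousOn)
    have hJ1int : IntervalIntegrable (fun x =>
        (Int.fract x ^ 2 - Int.fract x + 1/6) * (κd 1 x * Real.cos (k*x + 0))) volume 1 (M:ℝ) :=
      II_bdd_mul _ _ 1 (M:ℝ) hM1 hmeasK 2 hKbound
        ((hc1cont.mono hsubM).mul (Real.continuous_cos.comp (by fun_prop)).continuousOn)
    have hJ0int : IntervalIntegrable (fun x =>
        (Int.fract x ^ 2 - Int.fract x + 1/6) * (κd 0 x * Real.cos (k*x + -(Real.pi/2)))) volume 1 (M:ℝ) :=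
      II_bdd_mul _ _ 1 (M:ℝ) hM1 hmeasK 2 hKbound
        ((hc0cont.mono hsubM).mul (Real.continuous_cos.comp (by fun_prop)).continuousOn)
    have hKg2int : IntervalIntegrable (fun x =>
        (Int.fract x ^ 2 - Int.fract x + 1/6) * g2 x) volume 1 (M:ℝ) :=
      II_bdd_mul _ _ 1 (M:ℝ) hM1 hmeasK 2 hKbound (hg2cont.mono hsubM)
    have hg2int : IntervalIntegrable g2 volume 1 (M:ℝ) := by
      apply ContinuousOn.intervalIntegrable; rw [hIccM]; exact hg2cont.mono hsubM
    have hKsplit : (∫ x in (1:ℝ)..(M:ℝ), (Int.fract x ^ 2 - Int.fract x + 1/6) * g2 x)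
        = J2 + (2*k) * J1 + (-(k*k)) * J0 := by
      rw [hJ2def, hJ1def, hJ0def, ← intervalIntegral.integral_const_mul,
        ← intervalIntegral.integral_const_mul,
        ← intervalIntegral.integral_add (hJ2int) (hJ1int.const_mul _),
        ← intervalIntegral.integral_add ((hJ2int).add (hJ1int.const_mul _)) (hJ0int.const_mul _)]
      apply intervalIntegral.integral_congr
      intro x _
      have hsc : Real.cos (k*x + -(Real.pi/2)) = Real.sin (k*x) := by
        rw [show k*x + -(Real.pi/2) = k*x - Real.pi/2 by ring, Real.cos_sub_pi_div_two]
      simp only [hg2def]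
      rw [hsc, add_zero]
      ring
    have hGsplit : (∫ x in (1:ℝ)..(M:ℝ), (((Int.fract x)^2 - Int.fract x)/2) * g2 x)
        = (1/2) * (∫ x in (1:ℝ)..(M:ℝ), (Int.fract x ^ 2 - Int.fract x + 1/6) * g2 x)
          - (1/12) * (∫ x in (1:ℝ)..(M:ℝ), g2 x) := by
      rw [← intervalIntegral.integral_const_mul, ← intervalIntegral.integral_const_mul,
        ← intervalIntegral.integral_sub (hKg2int.const_mul _) (hg2int.const_mul _)]
      apply intervalIntegral.integral_congr
      intro x _
      ring
    have hFTC : (∫ x in (1:ℝ)..(M:ℝ), g2 x) = g1 (M:ℝ) - g1 1 := by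
      apply intervalIntegral.integral_eq_sub_of_hasDerivAt
      · intro x hx
        exact hg1 x (hsubM (hIccM ▸ hx))
      · exact hg2int
    -- oscillatory bounds
    have hbJ0 : |J0| ≤ S*(2*B*(2*Q'+3)+A)/Real.pi^2 := by
      have h1 := oscB (2*Q'+3) κd B A hB0 hA0
        (fun s hs x hx => hderiv s (by omega) x hx)
        (fun s hs x hx => hBq s (by omega) x hx)
        hconttop hint hAr k (-(Real.pi/2)) (M:ℝ) hk0 hkπ hM1
      rw [hJ0def, hSdef]
      exact_mod_cast h1
    have hbJ1 : |J1| ≤ S*(2*B*(2*Q'+2)+A)/Real.pi^2 := by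
      have h1 := oscB (2*Q'+2) (fun s => κd (s+1)) B A hB0 hA0
        (fun s hs x hx => hderiv (s+1) (by omega) x hx)
        (fun s hs x hx => hBq (s+1) (by omega) x hx)
        hconttop hint hAr k 0 (M:ℝ) hk0 hkπ hM1
      rw [hJ1def, hSdef]
      exact_mod_cast h1
    have hbJ2 : |J2| ≤ S*(2*B*(2*Q'+1)+A)/Real.pi^2 := by
      have h1 := oscB (2*Q'+1) (fun s => κd (s+2)) B A hB0 hA0
        (fun s hs x hx => hderiv (s+2) (by omega) x hx)
        (fun s hs x hx => hBq (s+2) (by omega) x hx)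
        hconttop hint hAr k (-(Real.pi/2)) (M:ℝ) hk0 hkπ hM1
      rw [hJ2def, hSdef]
      exact_mod_cast h1
    -- pointwise bounds
    have hgbd : ∀ x ∈ Set.Ici (1:ℝ), |g x| ≤ B := by
      intro x hx
      rw [hgdef]
      simp only
      rw [abs_mul]
      calc |κd 0 x| * |Real.sin (k*x)| ≤ B * 1 := by
            gcongr
            · exact hBq 0 (by omega) x hx
            · exact Real.abs_sin_le_one _
        _ = B := mul_one B
    have hg1bd : ∀ x ∈ Set.Ici (1:ℝ), |g1 x| ≤ B + B*Real.pi := by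
      intro x hx
      rw [hg1def]
      simp only
      have t1 : |κd 1 x * Real.sin (k*x)| ≤ B := by
        rw [abs_mul]
        calc |κd 1 x| * |Real.sin (k*x)| ≤ B * 1 := by
              gcongr
              · exact hBq 1 (by omega) x hx
              · exact Real.abs_sin_le_one _
          _ = B := mul_one B
      have t2 : |κd 0 x * (Real.cos (k*x) * k)| ≤ B * Real.pi := by
        rw [abs_mul, abs_mul]
        have hkk : |k| ≤ Real.pi := by rw [abs_of_pos hk0]; exact hkπ
        calc |κd 0 x| * (|Real.cos (k*x)| * |k|) ≤ B * (1 * Real.pi) := by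
              gcongr
              · exact hBq 0 (by omega) x hx
              · exact Real.abs_cos_le_one _
          _ = B * Real.pi := by ring
      calc |κd 1 x * Real.sin (k*x) + κd 0 x * (Real.cos (k*x) * k)|
          ≤ |κd 1 x * Real.sin (k*x)| + |κd 0 x * (Real.cos (k*x) * k)| := abs_add_le _ _
        _ ≤ B + B*Real.pi := add_le_add t1 t2
    -- assemble the identity
    have hD : (∑ l ∈ Finset.Icc 1 M, κd 0 (l:ℝ) * Real.sin (k*(l:ℝ)))
        - (∫ x in (1:ℝ)..(M:ℝ), κd 0 x * Real.sin (k*x))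
        = g 1 / 2 + g (M:ℝ) / 2
          + (- ((1/2) * (J2 + (2*k) * J1 + (-(k*k)) * J0) - (1/12) * (g1 (M:ℝ) - g1 1))) := by
      have e0 : (∑ l ∈ Finset.Icc 1 M, κd 0 (l:ℝ) * Real.sin (k*(l:ℝ)))
          = ∑ l ∈ Finset.Icc 1 M, g (l:ℝ) := rfl
      have e1' : (∫ x in (1:ℝ)..(M:ℝ), κd 0 x * Real.sin (k*x))
          = ∫ x in (1:ℝ)..(M:ℝ), g x := rfl
      rw [e0, e1', hstage1, hstage2, hGsplit, hFTC, hKsplit]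
      ring
    rw [hD]
    have hb1 : |g 1| ≤ B := hgbd 1 (Set.mem_Ici.mpr le_rfl)
    have hb2 : |g (M:ℝ)| ≤ B := hgbd (M:ℝ) (Set.mem_Ici.mpr hM1)
    have hbg11 : |g1 1| ≤ B + B*Real.pi := hg1bd 1 (Set.mem_Ici.mpr le_rfl)
    have hbg1M : |g1 (M:ℝ)| ≤ B + B*Real.pi := hg1bd (M:ℝ) (Set.mem_Ici.mpr hM1)
    have hkJ1 : |(2*k) * J1| ≤ 2*Real.pi * (S*(2*B*(2*Q'+2)+A)/Real.pi^2) := by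
      rw [abs_mul]
      have : |2*k| ≤ 2*Real.pi := by rw [abs_of_pos (by linarith)]; linarith
      apply mul_le_mul this hbJ1 (abs_nonneg _) (by linarith)
    have hkJ0 : |(-(k*k)) * J0| ≤ Real.pi^2 * (S*(2*B*(2*Q'+3)+A)/Real.pi^2) := by
      rw [abs_mul]
      have : |(-(k*k))| ≤ Real.pi^2 := by
        rw [abs_neg, abs_of_pos (mul_pos hk0 hk0), pow_two]
        exact mul_le_mul hkπ hkπ hk0.le hπ0.le
      apply mul_le_mul this hbJ0 (abs_nonneg _) (by positivity)
    have hinner : |(- ((1/2) * (J2 + (2*k) * J1 + (-(k*k)) * J0) - (1/12) * (g1 (M:ℝ) - g1 1)))|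
        ≤ (1/2)*( S*(2*B*(2*Q'+1)+A)/Real.pi^2
          + 2*Real.pi*(S*(2*B*(2*Q'+2)+A)/Real.pi^2)
          + Real.pi^2*(S*(2*B*(2*Q'+3)+A)/Real.pi^2) )
          + (1/12)*(2*(B + B*Real.pi)) := by
      rw [abs_neg]
      have hsum : |J2 + (2*k) * J1 + (-(k*k)) * J0|
          ≤ S*(2*B*(2*Q'+1)+A)/Real.pi^2
            + 2*Real.pi*(S*(2*B*(2*Q'+2)+A)/Real.pi^2)
            + Real.pi^2*(S*(2*B*(2*Q'+3)+A)/Real.pi^2) := by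
        calc |J2 + (2*k) * J1 + (-(k*k)) * J0|
            ≤ |J2 + (2*k) * J1| + |(-(k*k)) * J0| := abs_add_le _ _
          _ ≤ (|J2| + |(2*k) * J1|) + |(-(k*k)) * J0| := by
              have := abs_add_le J2 ((2*k) * J1); linarith
          _ ≤ _ := by
              have := hbJ2; linarith
      have h1 : |(1/2) * (J2 + (2*k) * J1 + (-(k*k)) * J0)|
          ≤ (1/2)*( S*(2*B*(2*Q'+1)+A)/Real.pi^2
            + 2*Real.pi*(S*(2*B*(2*Q'+2)+A)/Real.pi^2)
            + Real.pi^2*(S*(2*B*(2*Q'+3)+A)/Real.pi^2) ) := by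
        rw [abs_mul, abs_of_pos (by norm_num : (0:ℝ) < 1/2)]
        linarith
      have h2 : |(1/12) * (g1 (M:ℝ) - g1 1)| ≤ (1/12)*(2*(B + B*Real.pi)) := by
        rw [abs_mul, abs_of_pos (by norm_num : (0:ℝ) < 1/12)]
        have : |g1 (M:ℝ) - g1 1| ≤ 2*(B + B*Real.pi) := by
          have := (abs_sub (g1 (M:ℝ)) (g1 1)).trans (add_le_add hbg1M hbg11)
          linarith
        linarith
      calc |(1/2) * (J2 + (2*k) * J1 + (-(k*k)) * J0) - (1/12) * (g1 (M:ℝ) - g1 1)|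
          ≤ |(1/2) * (J2 + (2*k) * J1 + (-(k*k)) * J0)| + |(1/12) * (g1 (M:ℝ) - g1 1)| := by
            simpa [sub_eq_add_neg, abs_neg] using
              abs_add_le ((1/2) * (J2 + (2*k) * J1 + (-(k*k)) * J0)) (-((1/12) * (g1 (M:ℝ) - g1 1)))
        _ ≤ _ := add_le_add h1 h2
    calc |g 1 / 2 + g (M:ℝ) / 2
          + (- ((1/2) * (J2 + (2*k) * J1 + (-(k*k)) * J0) - (1/12) * (g1 (M:ℝ) - g1 1)))|
        ≤ |g 1 / 2 + g (M:ℝ) / 2|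
          + |(- ((1/2) * (J2 + (2*k) * J1 + (-(k*k)) * J0) - (1/12) * (g1 (M:ℝ) - g1 1)))| :=
          abs_add_le _ _
      _ ≤ c1 := by
          have habs12 : |g 1 / 2 + g (M:ℝ) / 2| ≤ B := by
            have := abs_add_le (g 1 / 2) (g (M:ℝ) / 2)
            rw [abs_div, abs_div] at this
            have h2 : |(2:ℝ)| = 2 := by norm_num
            rw [h2] at this
            linarith
          rw [hc1def]
          linarith
      _ ≤ 1 + |c1| := by
          have := le_abs_self c1
          linarith
end

section
/- Let Q be a natural number and let κ : ℝ → ℝ be (2Q+1)-times continuously differentiable on [1, ∞), such that for every q with 0 ≤ q ≤ 2Q the q-th derivative κ^{(q)} is bounded on [1, ∞), and the (2Q+1)-st derivative κ^{(2Q+1)} is absolutely integrable on [1, ∞). Then for every Λ > 0 the improper integral ∫_1^∞ κ(x) cos(Λ x) / x dx converges. -/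
open Real Filter MeasureTheory intervalIntegral

noncomputable def Efun (Λ x : ℝ) : ℂ := Complex.exp ((Λ * x : ℝ) * Complex.I)

lemma Efun_norm (Λ x : ℝ) : ‖Efun Λ x‖ = 1 := by
  rw [Efun, Complex.norm_exp_ofReal_mul_I]

lemma Efun_continuous (Λ : ℝ) : Continuous (Efun Λ) := by
  unfold Efun; fun_prop

lemma Efun_hasDerivAt (Λ x : ℝ) :
    HasDerivAt (Efun Λ) ((Λ * Complex.I) * Efun Λ x) x := by
  have h0 : HasDerivAt (fun y : ℝ => Λ * y) Λ x := by
    simpa using (hasDerivAt_id x).const_mul Λ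
  have h2 : HasDerivAt (fun y : ℝ => ((Λ * y : ℝ) : ℂ) * Complex.I)
      ((Λ : ℂ) * Complex.I) x := h0.ofReal_comp.mul_const _
  have h3 := h2.cexp
  rw [show ((Λ : ℂ) * Complex.I) * Efun Λ x = Efun Λ x * ((Λ:ℂ) * Complex.I) from
    mul_comm _ _]
  exact h3

lemma tendsto_II_of_integrable (g : ℝ → ℂ) (hg : IntegrableOn g (Set.Ioi 1)) :
    Tendsto (fun M : ℝ => ∫ x in (1:ℝ)..M, g x) atTop
      (nhds (∫ x in Set.Ioi (1:ℝ), g x)) :=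
  intervalIntegral_tendsto_integral_Ioi 1 hg tendsto_id

lemma integrableOn_of_bound (g : ℝ → ℂ) (b : ℝ → ℝ)
    (hg : ContinuousOn g (Set.Ici 1)) (hb : IntegrableOn b (Set.Ioi 1))
    (hle : ∀ x ∈ Set.Ioi (1:ℝ), ‖g x‖ ≤ b x) : IntegrableOn g (Set.Ioi 1) := by
  refine MeasureTheory.Integrable.mono' hb
    ((hg.mono Set.Ioi_subset_Ici_self).aestronglyMeasurable measurableSet_Ioi) ?_
  filter_upwards [ae_restrict_mem measurableSet_Ioi] with x hx using hle x hx

lemma contOn_aux (Λ : ℝ) (f : ℝ → ℝ) (hf : ContinuousOn f (Set.Ici 1)) (c : ℂ)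
    (hc : c ≠ 0) (n : ℕ) :
    ContinuousOn (fun x : ℝ => (f x : ℂ) * Efun Λ x / (c * (x:ℂ)^n)) (Set.Ici 1) := by
  apply ContinuousOn.div
  · exact (Complex.continuous_ofReal.comp_continuousOn hf).mul
      (Efun_continuous Λ).continuousOn
  · fun_prop
  · intro x hx
    exact mul_ne_zero hc (pow_ne_zero _
      (Complex.ofReal_ne_zero.mpr (ne_of_gt (lt_of_lt_of_le one_pos hx))))

lemma ibp_step (Λ : ℝ) (hΛ : Λ ≠ 0) (f f' : ℝ → ℝ)
    (hd : ∀ x ∈ Set.Ici (1:ℝ), HasDerivAt f (f' x) x)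
    (hc' : ContinuousOn f' (Set.Ici 1))
    (hB : ∃ B, ∀ x ∈ Set.Ici (1:ℝ), |f x| ≤ B)
    (hconv : ∃ J : ℂ, Tendsto (fun M : ℝ => ∫ x in (1:ℝ)..M, (f' x : ℂ) * Efun Λ x / x)
      atTop (nhds J)) :
    ∃ I : ℂ, Tendsto (fun M : ℝ => ∫ x in (1:ℝ)..M, (f x : ℂ) * Efun Λ x / x)
      atTop (nhds I) := by
  obtain ⟨B, hBle⟩ := hB
  obtain ⟨J, hJ⟩ := hconv
  set C : ℂ := (Λ : ℂ) * Complex.I with hC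
  have hCne : C ≠ 0 := by
    simp [hC, Complex.I_ne_zero, hΛ]
  have hcf : ContinuousOn f (Set.Ici 1) :=
    fun x hx => (hd x hx).continuousAt.continuousWithinAt
  set G : ℝ → ℂ := fun x => (f x : ℂ) * Efun Λ x / (C * x) with hG
  set D : ℝ → ℂ := fun x => (f' x : ℂ) * Efun Λ x / (C * x) + (f x : ℂ) * Efun Λ x / x
      - (f x : ℂ) * Efun Λ x / (C * (x:ℂ)^2) with hD
  have hxne : ∀ x ∈ Set.Ici (1:ℝ), (x:ℂ) ≠ 0 := by
    intro x hx
    simp only [ne_eq, Complex.ofReal_eq_zero]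
    exact ne_of_gt (lt_of_lt_of_le one_pos hx)
  have hGderiv : ∀ x ∈ Set.Ici (1:ℝ), HasDerivAt G (D x) x := by
    intro x hx
    have hu : HasDerivAt (fun y => (f y : ℂ) * Efun Λ y)
        ((f' x : ℂ) * Efun Λ x + (f x : ℂ) * (((Λ:ℂ) * Complex.I) * Efun Λ x)) x :=
      ((hd x hx).ofReal_comp).mul (Efun_hasDerivAt Λ x)
    have hv : HasDerivAt (fun y : ℝ => C * (y : ℂ)) C x := by
      simpa using ((hasDerivAt_id x).ofReal_comp.const_mul C)
    have hvne : C * (x:ℂ) ≠ 0 := mul_ne_zero hCne (hxne x hx)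
    have := hu.div hv hvne
    refine this.congr_deriv ?_
    have hx0 : (x:ℂ) ≠ 0 := hxne x hx
    have hL0 : (Λ:ℂ) ≠ 0 := Complex.ofReal_ne_zero.mpr hΛ
    rw [hD, hC]
    field_simp
  -- continuity of pieces on Ici 1
  have hcont1 : ContinuousOn (fun x : ℝ => (f x : ℂ) * Efun Λ x / x) (Set.Ici 1) := by
    have := contOn_aux Λ f hcf 1 one_ne_zero 1
    simpa using this
  have hcont2 : ContinuousOn (fun x : ℝ => (f' x : ℂ) * Efun Λ x / x) (Set.Ici 1) := by
    have := contOn_aux Λ f' hc' 1 one_ne_zero 1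
    simpa using this
  have hcont3 : ContinuousOn (fun x : ℝ => (f' x : ℂ) * Efun Λ x / (C * x)) (Set.Ici 1) := by
    have := contOn_aux Λ f' hc' C hCne 1
    simpa using this
  have hcont4 : ContinuousOn (fun x : ℝ => (f x : ℂ) * Efun Λ x / (C * (x:ℂ)^2)) (Set.Ici 1) :=
    contOn_aux Λ f hcf C hCne 2
  have hcontD : ContinuousOn D (Set.Ici 1) := by
    rw [hD]
    exact ((contOn_aux Λ f' hc' C hCne 1).congr (by intro x hx; simp)).add hcont1 |>.sub hcont4
  -- key identity
  have heq : ∀ M : ℝ, 1 ≤ M →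
      (∫ x in (1:ℝ)..M, (f x : ℂ) * Efun Λ x / x)
        = (G M - G 1) - (∫ x in (1:ℝ)..M, (f' x : ℂ) * Efun Λ x / (C * x))
          + ∫ x in (1:ℝ)..M, (f x : ℂ) * Efun Λ x / (C * (x:ℂ)^2) := by
    intro M hM
    have hsub : Set.uIcc (1:ℝ) M ⊆ Set.Ici 1 := by
      rw [Set.uIcc_of_le hM]; exact Set.Icc_subset_Ici_self
    have II3 : IntervalIntegrable (fun x : ℝ => (f' x : ℂ) * Efun Λ x / (C * x))
        volume 1 M := (hcont3.mono hsub).intervalIntegrable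
    have II4 : IntervalIntegrable (fun x : ℝ => (f x : ℂ) * Efun Λ x / (C * (x:ℂ)^2))
        volume 1 M := (hcont4.mono hsub).intervalIntegrable
    have IID : IntervalIntegrable D volume 1 M := (hcontD.mono hsub).intervalIntegrable
    have hDint : (∫ x in (1:ℝ)..M, D x) = G M - G 1 :=
      intervalIntegral.integral_eq_sub_of_hasDerivAt
        (fun x hx => hGderiv x (hsub hx)) IID
    have hptwise : Set.EqOn (fun x : ℝ => (f x : ℂ) * Efun Λ x / x)
        (fun x : ℝ => D x - (f' x : ℂ) * Efun Λ x / (C * x)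
          + (f x : ℂ) * Efun Λ x / (C * (x:ℂ)^2)) (Set.uIcc 1 M) := by
      intro x hx
      simp only [hD]
      ring
    rw [intervalIntegral.integral_congr hptwise,
      intervalIntegral.integral_add (IID.sub II3) II4,
      intervalIntegral.integral_sub IID II3, hDint]
  -- limits
  have hB0 : 0 ≤ B := le_trans (abs_nonneg _) (hBle 1 Set.self_mem_Ici)
  have hGlim : Tendsto G atTop (nhds 0) := by
    apply squeeze_zero_norm' (a := fun M : ℝ => B / |Λ| / M)
    · filter_upwards [eventually_ge_atTop (1:ℝ)] with M hM
      have hM0 : (0:ℝ) < M := lt_of_lt_of_le one_pos hM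
      have h1 : ‖G M‖ = |f M| / (|Λ| * M) := by
        rw [hG]
        rw [norm_div, norm_mul, norm_mul, Complex.norm_real, Complex.norm_real,
          Efun_norm, hC, norm_mul, Complex.norm_real, Complex.norm_I]
        simp [Real.norm_eq_abs, abs_of_pos hM0]
      rw [h1, div_div]
      gcongr
      exact hBle M hM
    · exact tendsto_const_nhds.div_atTop tendsto_id
  have hterm2 : Tendsto (fun M : ℝ => ∫ x in (1:ℝ)..M, (f' x : ℂ) * Efun Λ x / (C * x))
      atTop (nhds (J / C)) := by
    have hfun : ∀ M : ℝ, (∫ x in (1:ℝ)..M, (f' x : ℂ) * Efun Λ x / (C * x))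
        = (∫ x in (1:ℝ)..M, (f' x : ℂ) * Efun Λ x / x) / C := by
      intro M
      rw [← intervalIntegral.integral_div]
      congr 1
      ext x
      rw [mul_comm C, ← div_div]
    simp only [hfun]
    exact hJ.div_const C
  have hint4 : IntegrableOn (fun x : ℝ => (f x : ℂ) * Efun Λ x / (C * (x:ℂ)^2))
      (Set.Ioi 1) := by
    apply integrableOn_of_bound _ (fun x => B / |Λ| * x ^ (-2 : ℝ)) hcont4
    · exact (integrableOn_Ioi_rpow_of_lt (by norm_num) one_pos).const_mul _
    · intro x hx
      have hx0 : (0:ℝ) < x := lt_trans one_pos hx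
      have h1 : ‖(f x : ℂ) * Efun Λ x / (C * (x:ℂ)^2)‖ = |f x| / (|Λ| * x^2) := by
        rw [norm_div, norm_mul, Complex.norm_real, Efun_norm, mul_one, hC, norm_mul,
          norm_mul, Complex.norm_real, Complex.norm_I, norm_pow, Complex.norm_real]
        simp [Real.norm_eq_abs, abs_of_pos hx0]
      have hrw : x ^ (-2 : ℝ) = (x ^ 2)⁻¹ := by
        rw [Real.rpow_neg hx0.le, show ((2:ℝ)) = ((2:ℕ):ℝ) by norm_num,
          Real.rpow_natCast]
      rw [h1, hrw, ← div_eq_mul_inv, div_div]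
      gcongr
      exact hBle x (Set.mem_Ici.mpr (le_of_lt hx))
  have hterm3 := tendsto_II_of_integrable _ hint4
  refine ⟨(0 - G 1) - J / C + ∫ x in Set.Ioi (1:ℝ), (f x : ℂ) * Efun Λ x / (C * (x:ℂ)^2), ?_⟩
  have hlim := ((hGlim.sub_const (G 1)).sub hterm2).add hterm3
  apply hlim.congr'
  filter_upwards [eventually_ge_atTop (1:ℝ)] with M hM
  exact (heq M hM).symm

lemma key (n : ℕ) : ∀ fd : ℕ → ℝ → ℝ,
    (∀ q < n + 1, ∀ x ∈ Set.Ici (1 : ℝ), HasDerivAt (fd q) (fd (q + 1) x) x) →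
    ContinuousOn (fd (n + 1)) (Set.Ici (1 : ℝ)) →
    (∀ q ≤ n, ∃ B : ℝ, ∀ x ∈ Set.Ici (1 : ℝ), |fd q x| ≤ B) →
    IntegrableOn (fun x => |fd (n + 1) x|) (Set.Ici (1 : ℝ)) →
    ∀ Λ : ℝ, Λ ≠ 0 →
    ∃ I : ℂ, Tendsto (fun M : ℝ => ∫ x in (1:ℝ)..M, (fd 0 x : ℂ) * Efun Λ x / x)
      atTop (nhds I) := by
  induction n with
  | zero =>
    intro fd hderiv hconttop hbdd hint Λ hΛ
    refine ibp_step Λ hΛ (fd 0) (fd 1) (hderiv 0 (by omega)) hconttop (hbdd 0 le_rfl) ?_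
    have hg : IntegrableOn (fun x : ℝ => (fd 1 x : ℂ) * Efun Λ x / x) (Set.Ioi 1) := by
      apply integrableOn_of_bound _ (fun x => |fd 1 x|)
        (contOn_aux Λ (fd 1) hconttop 1 one_ne_zero 1 |>.congr (by intro x hx; simp))
        (hint.mono_set Set.Ioi_subset_Ici_self)
      intro x hx
      have hx1 : (1:ℝ) ≤ x := le_of_lt hx
      have hx0 : (0:ℝ) < x := lt_of_lt_of_le one_pos hx1
      rw [norm_div, norm_mul, Complex.norm_real, Efun_norm, mul_one,
        Complex.norm_real, Real.norm_eq_abs, Real.norm_eq_abs, abs_of_pos hx0]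
      calc |fd 1 x| / x ≤ |fd 1 x| / 1 := by gcongr
        _ = |fd 1 x| := div_one _
    exact ⟨_, tendsto_II_of_integrable _ hg⟩
  | succ n ih =>
    intro fd hderiv hconttop hbdd hint Λ hΛ
    refine ibp_step Λ hΛ (fd 0) (fd 1) (hderiv 0 (by omega)) ?_ (hbdd 0 (by omega)) ?_
    · exact fun x hx => (hderiv 1 (by omega) x hx).continuousAt.continuousWithinAt
    · exact ih (fun q => fd (q + 1)) (fun q hq x hx => hderiv (q + 1) (by omega) x hx)
        hconttop (fun q hq => hbdd (q + 1) (by omega)) hint Λ hΛ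

/-- Convergence of `∫_1^∞ κ(x) cos(Λx)/x dx` (Appendix G): if `κ` is `(2Q+1)`-times
continuously differentiable on `[1,∞)` (the family `κd q` of successive
derivatives, `κd 0 = κ`), with `κd q` bounded on `[1,∞)` for `0 ≤ q ≤ 2Q` and
`κd (2Q+1)` absolutely integrable on `[1,∞)`, then for every `Λ > 0` the improper
integral `∫_1^∞ κ(x) cos(Λx)/x dx` converges. -/
theorem stmt_12 (Q : ℕ) (κ : ℝ → ℝ) (κd : ℕ → ℝ → ℝ) (hκ0 : κd 0 = κ)
    (hderiv : ∀ q < 2 * Q + 1, ∀ x ∈ Set.Ici (1 : ℝ),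
      HasDerivAt (κd q) (κd (q + 1) x) x)
    (hconttop : ContinuousOn (κd (2 * Q + 1)) (Set.Ici (1 : ℝ)))
    (hbdd : ∀ q ≤ 2 * Q, ∃ B : ℝ, ∀ x ∈ Set.Ici (1 : ℝ), |κd q x| ≤ B)
    (hint : IntegrableOn (fun x => |κd (2 * Q + 1) x|) (Set.Ici (1 : ℝ))) :
    ∀ Λ : ℝ, 0 < Λ → ∃ I : ℝ,
      Tendsto (fun M : ℝ => ∫ x in (1 : ℝ)..M, κ x * Real.cos (Λ * x) / x) atTop
        (nhds I) := by
  intro Λ hΛ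
  subst hκ0
  obtain ⟨I, hI⟩ := key (2 * Q) κd hderiv hconttop hbdd hint Λ (ne_of_gt hΛ)
  refine ⟨I.re, ?_⟩
  have hre : Tendsto (fun M : ℝ => (∫ x in (1:ℝ)..M, (κd 0 x : ℂ) * Efun Λ x / x).re)
      atTop (nhds I.re) := (Complex.continuous_re.tendsto I).comp hI
  apply hre.congr'
  have hcκ : ContinuousOn (κd 0) (Set.Ici 1) :=
    fun x hx => (hderiv 0 (by omega) x hx).continuousAt.continuousWithinAt
  have hcont : ContinuousOn (fun x : ℝ => (κd 0 x : ℂ) * Efun Λ x / x) (Set.Ici 1) :=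
    (contOn_aux Λ (κd 0) hcκ 1 one_ne_zero 1).congr (by intro x hx; simp)
  filter_upwards [eventually_ge_atTop (1:ℝ)] with M hM
  have hsub : Set.uIcc (1:ℝ) M ⊆ Set.Ici 1 := by
    rw [Set.uIcc_of_le hM]; exact Set.Icc_subset_Ici_self
  have II : IntervalIntegrable (fun x : ℝ => (κd 0 x : ℂ) * Efun Λ x / x) volume 1 M :=
    (hcont.mono hsub).intervalIntegrable
  have hcomm := ContinuousLinearMap.intervalIntegral_comp_comm Complex.reCLM II
  simp only [Complex.reCLM_apply] at hcomm
  rw [← hcomm]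
  apply intervalIntegral.integral_congr
  intro x hx
  have hptw : ((κd 0 x : ℂ) * Efun Λ x / x).re = κd 0 x * Real.cos (Λ * x) / x := by
    rw [show ((κd 0 x : ℂ) * Efun Λ x / x) = ((κd 0 x / x : ℝ) : ℂ) * Efun Λ x by
      push_cast; ring]
    rw [Complex.re_ofReal_mul, Efun, Complex.exp_ofReal_mul_I_re]
    ring
  exact hptw
end

section
/- Let α ∈ (0, 1]. There exists a constant C > 0 such that for every integer M ≥ 1 and every k ∈ (0, π], |∑_{l=1}^{M} sin(k l) / l^α − ∫_1^M sin(k x) / x^α dx| ≤ C. -/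
open Real Filter intervalIntegral

noncomputable def TT (k x : ℝ) : ℝ := (Real.cos k - Real.cos (k * x)) / k
noncomputable def SS (k : ℝ) (n : ℕ) : ℝ := ∑ l ∈ Finset.Icc 1 n, Real.sin (k * l)



lemma abs_cos_sub_cos' (a b : ℝ) : |Real.cos a - Real.cos b| ≤ |a - b| := by
  rw [Real.cos_sub_cos]
  have h1 : |Real.sin ((a + b) / 2)| ≤ 1 := Real.abs_sin_le_one _
  have h2 : |Real.sin ((a - b) / 2)| ≤ |(a - b) / 2| := Real.abs_sin_le_abs
  rw [abs_mul, abs_mul]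
  have : |(a - b) / 2| = |a - b| / 2 := by rw [abs_div]; norm_num
  rw [this] at h2
  have : |(-2 : ℝ)| = 2 := by norm_num
  rw [this]
  nlinarith [abs_nonneg (Real.sin ((a+b)/2)), abs_nonneg (Real.sin ((a-b)/2)), abs_nonneg (a-b)]

lemma two_sin_mul_SS (k : ℝ) (n : ℕ) :
    2 * Real.sin (k / 2) * SS k n = Real.cos (k / 2) - Real.cos (k * n + k / 2) := by
  induction n with
  | zero => simp [SS]
  | succ n ih =>
    have hS : SS k (n + 1) = SS k n + Real.sin (k * (n + 1)) := by
      rw [SS, SS, Finset.sum_Icc_succ_top (Nat.succ_le_succ (Nat.zero_le n))]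
      push_cast; ring_nf
    have key : Real.cos (k * n + k / 2) - Real.cos (k * (n + 1) + k / 2)
        = 2 * Real.sin (k / 2) * Real.sin (k * (n + 1)) := by
      rw [Real.cos_sub_cos]
      have e1 : (k * n + k / 2 + (k * (n + 1) + k / 2)) / 2 = k * (n + 1) := by ring
      have e2 : (k * n + k / 2 - (k * (n + 1) + k / 2)) / 2 = -(k / 2) := by ring
      rw [e1, e2, Real.sin_neg]; ring
    push_cast at hS key ⊢
    linear_combination ih - key + 2 * Real.sin (k / 2) * hS


lemma key_sin' {t : ℝ} (h0 : 0 < t) (h1 : t ≤ π / 2) : t ≤ Real.sin t * (1 + 2 * t) := by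
  rcases le_or_gt t (1/2) with h | h
  · have hc := Real.sin_gt_sub_cube h0
    have h2pos : 0 < 2 - t/4 - t^2/2 := by nlinarith
    have hfac : 0 < t^2 * (2 - t/4 - t^2/2) := mul_pos (pow_pos h0 2) h2pos
    nlinarith [mul_lt_mul_of_pos_right hc (show (0:ℝ) < 1 + 2*t by linarith), hfac]
  · have hs := Real.mul_le_sin h0.le h1
    have h2 : 2 * t ≤ π * Real.sin t := by
      rw [div_mul_eq_mul_div, div_le_iff₀ Real.pi_pos] at hs
      linarith
    have hπ := Real.pi_lt_d2
    have hsin : 0 < Real.sin t := by nlinarith [Real.pi_pos]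
    nlinarith [Real.pi_pos, mul_le_mul_of_nonneg_right h2 (show (0:ℝ) ≤ 1 + 2*t by linarith)]
lemma TT_close {k : ℝ} (hk0 : 0 < k) (x y : ℝ) : |TT k x - TT k y| ≤ |x - y| := by
  have : TT k x - TT k y = (Real.cos (k * y) - Real.cos (k * x)) / k := by
    rw [TT, TT]; field_simp; ring
  rw [this, abs_div, abs_of_pos hk0, div_le_iff₀ hk0]
  calc |Real.cos (k * y) - Real.cos (k * x)| ≤ |k * y - k * x| := abs_cos_sub_cos' _ _
    _ = |x - y| * k := by rw [show k * y - k * x = (y - x) * k by ring, abs_mul,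
        abs_of_pos hk0, abs_sub_comm]

lemma ST_bound {k : ℝ} (hk0 : 0 < k) (hkπ : k ≤ π) (n : ℕ) :
    |SS k n - TT k n| ≤ 3 := by
  have hs : 0 < Real.sin (k / 2) :=
    Real.sin_pos_of_pos_of_lt_pi (by linarith) (by linarith [Real.pi_pos])
  set s := Real.sin (k / 2) with hsdef
  have hS : SS k n = (Real.cos (k / 2) - Real.cos (k * n + k / 2)) / (2 * s) := by
    rw [eq_div_iff (by positivity)]
    linear_combination two_sin_mul_SS k n
  have hδ0 : 0 ≤ 1 / (2 * s) - 1 / k := by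
    have h2s : 2 * s ≤ k := by
      have := Real.sin_le (show 0 ≤ k / 2 by linarith)
      linarith
    have h3 : 1 / k ≤ 1 / (2 * s) :=
      one_div_le_one_div_of_le (by positivity) h2s
    linarith
  have hδ1 : 1 / (2 * s) - 1 / k ≤ 1 := by
    have hk2 : k / 2 ≤ π / 2 := by linarith
    have := key_sin' (show 0 < k / 2 by linarith) hk2
    -- k/2 ≤ s * (1 + k)
    have h1 : k ≤ 2 * s * (1 + k) := by linarith
    have h2 : 1 / (2 * s) ≤ (1 + k) / k := by
      rw [div_le_div_iff₀ (by positivity) hk0]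
      linarith
    have : (1 + k) / k = 1 / k + 1 := by field_simp
    rw [this] at h2
    linarith
  set A := Real.cos (k / 2) - Real.cos k with hA
  set B := Real.cos (k * n) - Real.cos (k * n + k / 2) with hB
  set Cc := Real.cos (k / 2) - Real.cos (k * n + k / 2) with hC
  set δ : ℝ := 1 / (2 * s) - 1 / k with hδdef
  have hE : SS k n - TT k n = (A + B) / k + Cc * δ := by
    rw [hS, TT, hδdef, hA, hB, hC]
    field_simp
    ring
  have hAb : |A| ≤ k / 2 := by
    have := abs_cos_sub_cos' (k / 2) k
    rw [show k / 2 - k = -(k/2) by ring, abs_neg, abs_of_pos (by linarith : (0:ℝ) < k/2)] at this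
    exact this
  have hBb : |B| ≤ k / 2 := by
    have := abs_cos_sub_cos' (k * n) (k * n + k / 2)
    rw [show k * n - (k * n + k / 2) = -(k/2) by ring, abs_neg,
      abs_of_pos (by linarith : (0:ℝ) < k/2)] at this
    exact this
  have hCb : |Cc| ≤ 2 := by
    rw [hC]
    calc |Real.cos (k/2) - Real.cos (k * n + k / 2)|
        ≤ |Real.cos (k/2)| + |Real.cos (k * n + k / 2)| := abs_sub _ _
      _ ≤ 1 + 1 := add_le_add (Real.abs_cos_le_one _) (Real.abs_cos_le_one _)
      _ = 2 := by norm_num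
  rw [hE]
  have h1 : |(A + B) / k| ≤ 1 := by
    rw [abs_div, abs_of_pos hk0, div_le_one hk0]
    calc |A + B| ≤ |A| + |B| := abs_add_le _ _
      _ ≤ k := by linarith
  have h2 : |Cc * δ| ≤ 2 := by
    rw [abs_mul, abs_of_nonneg hδ0]
    nlinarith [abs_nonneg Cc]
  calc |(A + B) / k + Cc * δ| ≤ |(A + B) / k| + |Cc * δ| := abs_add_le _ _
    _ ≤ 3 := by linarith


lemma SS_succ (k : ℝ) (n : ℕ) : SS k (n + 1) = SS k n + Real.sin (k * (n + 1)) := by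
  rw [SS, SS, Finset.sum_Icc_succ_top (Nat.succ_le_succ (Nat.zero_le n))]
  push_cast; ring_nf

lemma abel_sum (k : ℝ) (h : ℕ → ℝ) (n : ℕ) :
    ∑ l ∈ Finset.Icc 1 n, Real.sin (k * l) * h l =
      (∑ l ∈ Finset.Icc 1 n, SS k l * (h l - h (l + 1))) + SS k n * h (n + 1) := by
  induction n with
  | zero => simp [SS]
  | succ n ih =>
    rw [Finset.sum_Icc_succ_top (Nat.succ_le_succ (Nat.zero_le n)),
      Finset.sum_Icc_succ_top (Nat.succ_le_succ (Nat.zero_le n)), SS_succ]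
    push_cast at ih ⊢
    linear_combination ih


lemma hasDerivAt_TT' {k : ℝ} (hk : k ≠ 0) (x : ℝ) :
    HasDerivAt (TT k) (Real.sin (k * x)) x := by
  have h1 : HasDerivAt (fun x : ℝ => k * x) k x := by
    simpa using (hasDerivAt_id x).const_mul k
  have h2 : HasDerivAt (fun x : ℝ => Real.cos (k * x)) (-Real.sin (k * x) * k) x :=
    (Real.hasDerivAt_cos (k * x)).comp x h1
  have h3 : HasDerivAt (fun x : ℝ => (Real.cos k - Real.cos (k * x)) / k)
      ((0 - -Real.sin (k * x) * k) / k) x :=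
    ((hasDerivAt_const x (Real.cos k)).sub h2).div_const k
  convert h3 using 1
  · rfl
  · field_simp; ring

lemma hasDerivAt_H {α : ℝ} {x : ℝ} (hx : x ≠ 0) :
    HasDerivAt (fun y : ℝ => y ^ (-α)) (-α * x ^ (-α - 1)) x :=
  Real.hasDerivAt_rpow_const (Or.inl hx)

lemma cont_pow' {α : ℝ} {a b : ℝ} (ha : 1 ≤ a) (hab : a ≤ b) :
    ContinuousOn (fun x : ℝ => x ^ (-α - 1)) (Set.uIcc a b) := by
  intro x hx
  rw [Set.uIcc_of_le hab] at hx
  exact (Real.continuousAt_rpow_const x _ (Or.inl (by nlinarith [hx.1]))).continuousWithinAt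

lemma ftc_H {α : ℝ} {a b : ℝ} (ha : 1 ≤ a) (hab : a ≤ b) :
    ∫ x in a..b, α * x ^ (-α - 1) = a ^ (-α) - b ^ (-α) := by
  have hd : ∀ x ∈ Set.uIcc a b, HasDerivAt (fun y : ℝ => -(y ^ (-α))) (α * x ^ (-α - 1)) x := by
    intro x hx
    rw [Set.uIcc_of_le hab] at hx
    have := (hasDerivAt_H (α := α) (x := x) (by nlinarith [hx.1])).neg
    exact this.congr_deriv (by ring)
  have hint : IntervalIntegrable (fun x : ℝ => α * x ^ (-α - 1)) MeasureTheory.volume a b :=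
    (continuousOn_const.mul (cont_pow' ha hab)).intervalIntegrable
  rw [intervalIntegral.integral_eq_sub_of_hasDerivAt hd hint]
  ring
lemma TT_cont (k : ℝ) : Continuous (TT k) := by
  unfold TT
  fun_prop


lemma byparts {α k : ℝ} (hk : k ≠ 0) {m : ℝ} (hm : 1 ≤ m) :
    ∫ x in (1:ℝ)..m, x ^ (-α) * Real.sin (k * x)
      = m ^ (-α) * TT k m + ∫ x in (1:ℝ)..m, (α * x ^ (-α - 1)) * TT k x := by
  have hu : ∀ x ∈ Set.uIcc (1:ℝ) m, HasDerivAt (fun y : ℝ => y ^ (-α)) (-α * x ^ (-α - 1)) x := by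
    intro x hx
    rw [Set.uIcc_of_le hm] at hx
    exact Real.hasDerivAt_rpow_const (Or.inl (by linarith [hx.1]))
  have hv : ∀ x ∈ Set.uIcc (1:ℝ) m, HasDerivAt (TT k) (Real.sin (k * x)) x :=
    fun x _ => hasDerivAt_TT' hk x
  have hu' : IntervalIntegrable (fun x : ℝ => -α * x ^ (-α - 1)) MeasureTheory.volume 1 m :=
    (continuousOn_const.mul (cont_pow' le_rfl hm)).intervalIntegrable
  have hv' : IntervalIntegrable (fun x : ℝ => Real.sin (k * x)) MeasureTheory.volume 1 m :=
    (by fun_prop : Continuous (fun x : ℝ => Real.sin (k * x))).intervalIntegrable _ _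
  have h := intervalIntegral.integral_mul_deriv_eq_deriv_mul hu hv hu' hv'
  have hT1 : TT k 1 = 0 := by simp [TT]
  rw [hT1] at h
  rw [h]
  have : (fun x : ℝ => -α * x ^ (-α - 1) * TT k x)
      = fun x : ℝ => -((α * x ^ (-α - 1)) * TT k x) := by funext x; ring
  rw [show ∫ x in (1:ℝ)..m, -α * x ^ (-α - 1) * TT k x
      = ∫ x in (1:ℝ)..m, -((α * x ^ (-α - 1)) * TT k x) from by rw [this],
    intervalIntegral.integral_neg]
  ring

/-- For power-law decay `κ_{l,α} = l^{-α}` with `α ∈ (0,1]` (Appendix D), the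
Euler–Maclaurin remainder of the pairing function is bounded uniformly in `k` and
in the number of terms: there is `C > 0` such that for all integers `M ≥ 1` and
all `k ∈ (0, π]`,
`|∑_{l=1}^M sin(kl)/l^α − ∫_1^M sin(kx)/x^α dx| ≤ C`. -/
theorem stmt_13 (α : ℝ) (hα : α ∈ Set.Ioc (0 : ℝ) 1) :
    ∃ C : ℝ, 0 < C ∧ ∀ M : ℕ, 1 ≤ M → ∀ k ∈ Set.Ioc (0 : ℝ) Real.pi,
      |(∑ l ∈ Finset.Icc 1 M, Real.sin (k * l) / (l : ℝ) ^ α) -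
          ∫ x in (1 : ℝ)..(M : ℝ), Real.sin (k * x) / x ^ α| ≤ C := by
  obtain ⟨hα0, hα1⟩ := hα
  refine ⟨7, by norm_num, ?_⟩
  intro M hM k hk
  obtain ⟨hk0, hkπ⟩ := hk
  obtain ⟨N, rfl⟩ : ∃ N, M = N + 1 := ⟨M - 1, (Nat.succ_pred_eq_of_pos hM).symm⟩
  have hkne : k ≠ 0 := ne_of_gt hk0
  set m : ℝ := ((N + 1 : ℕ) : ℝ) with hm
  have hm1 : (1:ℝ) ≤ m := by
    rw [hm]; exact_mod_cast Nat.succ_le_succ (Nat.zero_le N)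
  set a : ℕ → ℝ := fun i => 1 + (i : ℕ) with ha
  have ha1 : ∀ i : ℕ, (1:ℝ) ≤ a i := by
    intro i; rw [ha]; simp [Nat.cast_nonneg]
  have hastep : ∀ i : ℕ, a i ≤ a (i + 1) := by
    intro i; rw [ha]; push_cast; linarith
  -- the integrand pieces
  set F : ℝ → ℝ := fun x => (α * x ^ (-α - 1)) * TT k x with hF
  have hFcont : ∀ i : ℕ, ContinuousOn F (Set.uIcc (a i) (a (i + 1))) := by
    intro i
    exact (continuousOn_const.mul (cont_pow' (ha1 i) (hastep i))).mul
      ((TT_cont k).continuousOn)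
  have hFint : ∀ i : ℕ, IntervalIntegrable F MeasureTheory.volume (a i) (a (i + 1)) :=
    fun i => (hFcont i).intervalIntegrable
  -- Step A : rewrite sum
  have hsum : (∑ l ∈ Finset.Icc 1 (N + 1), Real.sin (k * l) / (l : ℝ) ^ α)
      = ∑ l ∈ Finset.Icc 1 (N + 1), Real.sin (k * l) * ((l : ℝ)) ^ (-α) := by
    refine Finset.sum_congr rfl fun l hl => ?_
    have hl1 : 1 ≤ l := (Finset.mem_Icc.mp hl).1
    have hlr : (0:ℝ) < l := by exact_mod_cast hl1
    rw [Real.rpow_neg hlr.le, div_eq_mul_inv]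
  -- Step A' : rewrite integral
  have hintg : (∫ x in (1:ℝ)..m, Real.sin (k * x) / x ^ α)
      = ∫ x in (1:ℝ)..m, x ^ (-α) * Real.sin (k * x) := by
    apply intervalIntegral.integral_congr
    intro x hx
    rw [Set.uIcc_of_le hm1] at hx
    have hx0 : (0:ℝ) < x := lt_of_lt_of_le one_pos hx.1
    show Real.sin (k * x) / x ^ α = x ^ (-α) * Real.sin (k * x)
    rw [Real.rpow_neg hx0.le, div_eq_mul_inv]; ring
  -- Abel summation
  have hAbel := abel_sum k (fun l : ℕ => ((l : ℝ)) ^ (-α)) (N + 1)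
  -- peel off top term of the Abel sum
  have hpeel : (∑ l ∈ Finset.Icc 1 (N + 1),
        SS k l * (((l : ℝ)) ^ (-α) - (((l : ℕ) + 1 : ℕ) : ℝ) ^ (-α)))
      = (∑ l ∈ Finset.Icc 1 N, SS k l * (((l : ℝ)) ^ (-α) - (((l + 1 : ℕ)) : ℝ) ^ (-α)))
        + SS k (N + 1) * (m ^ (-α) - (((N + 2 : ℕ)) : ℝ) ^ (-α)) := by
    rw [Finset.sum_Icc_succ_top (Nat.succ_le_succ (Nat.zero_le N))]
  -- total sum identity
  have e1 : (∑ l ∈ Finset.Icc 1 (N + 1), Real.sin (k * l) / (l : ℝ) ^ α)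
      = (∑ i ∈ Finset.range N, SS k (1 + i) * ((a i) ^ (-α) - (a (i + 1)) ^ (-α)))
        + SS k (N + 1) * m ^ (-α) := by
    rw [hsum, hAbel, hpeel]
    have : (∑ l ∈ Finset.Icc 1 N, SS k l * (((l : ℝ)) ^ (-α) - (((l + 1 : ℕ)) : ℝ) ^ (-α)))
        = ∑ i ∈ Finset.range N, SS k (1 + i) * ((a i) ^ (-α) - (a (i + 1)) ^ (-α)) := by
      rw [← Finset.Ico_add_one_right_eq_Icc, Finset.sum_Ico_eq_sum_range]
      refine Finset.sum_congr (by norm_num) fun i _ => ?_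
      rw [ha]; push_cast; ring_nf
    rw [this]
    push_cast [hm]
    rw [show ((N:ℝ) + 1 + 1) = (N:ℝ) + 2 from by ring]
    ring
  -- integral identity
  have e2 : (∫ x in (1:ℝ)..m, Real.sin (k * x) / x ^ α)
      = m ^ (-α) * TT k m + ∑ i ∈ Finset.range N, ∫ x in (a i)..(a (i + 1)), F x := by
    rw [hintg, byparts hkne hm1]
    congr 1
    have hsplit := intervalIntegral.sum_integral_adjacent_intervals
      (a := a) (n := N) (f := F) (μ := MeasureTheory.volume) (fun i _ => hFint i)
    have ha0 : a 0 = 1 := by rw [ha]; norm_num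
    have haN : a N = m := by rw [ha, hm]; push_cast; ring
    rw [ha0, haN] at hsplit
    rw [← hsplit]
  -- per-term analysis
  have hterm : ∀ i ∈ Finset.range N,
      |SS k (1 + i) * ((a i) ^ (-α) - (a (i + 1)) ^ (-α)) - ∫ x in (a i)..(a (i + 1)), F x|
        ≤ 4 * ((a i) ^ (-α) - (a (i + 1)) ^ (-α)) := by
    intro i _
    have hgi : ∀ x ∈ Set.Icc (a i) (a (i + 1)), |SS k (1 + i) - TT k x| ≤ 4 := by
      intro x hx
      have h1 : |SS k (1 + i) - TT k (a i)| ≤ 3 := by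
        have := ST_bound hk0 hkπ (1 + i)
        have hcast : ((1 + i : ℕ) : ℝ) = a i := by rw [ha]; push_cast; ring
        rwa [hcast] at this
      have h2 : |TT k (a i) - TT k x| ≤ 1 := by
        refine le_trans (TT_close hk0 _ _) ?_
        rw [abs_sub_comm, abs_of_nonneg (by linarith [hx.1])]
        have := hx.2
        have : x ≤ a i + 1 := by rw [ha] at this ⊢; push_cast at this ⊢; linarith
        linarith
      calc |SS k (1 + i) - TT k x|
          = |(SS k (1 + i) - TT k (a i)) + (TT k (a i) - TT k x)| := by ring_nf
        _ ≤ |SS k (1 + i) - TT k (a i)| + |TT k (a i) - TT k x| := abs_add_le _ _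
        _ ≤ 4 := by linarith
    -- rewrite SS * Δ as an integral
    have hSD : SS k (1 + i) * ((a i) ^ (-α) - (a (i + 1)) ^ (-α))
        = ∫ x in (a i)..(a (i + 1)), SS k (1 + i) * (α * x ^ (-α - 1)) := by
      rw [intervalIntegral.integral_const_mul, ftc_H (ha1 i) (hastep i)]
    have hint1 : IntervalIntegrable (fun x : ℝ => SS k (1 + i) * (α * x ^ (-α - 1)))
        MeasureTheory.volume (a i) (a (i + 1)) :=
      (continuousOn_const.mul (continuousOn_const.mul (cont_pow' (ha1 i) (hastep i)))).intervalIntegrable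
    have hdiff : SS k (1 + i) * ((a i) ^ (-α) - (a (i + 1)) ^ (-α))
          - (∫ x in (a i)..(a (i + 1)), F x)
        = ∫ x in (a i)..(a (i + 1)), (α * x ^ (-α - 1)) * (SS k (1 + i) - TT k x) := by
      rw [hSD, ← intervalIntegral.integral_sub hint1 (hFint i)]
      refine intervalIntegral.integral_congr fun x _ => ?_
      rw [hF]; ring
    rw [hdiff]
    have habs : |∫ x in (a i)..(a (i + 1)), (α * x ^ (-α - 1)) * (SS k (1 + i) - TT k x)|
        ≤ ∫ x in (a i)..(a (i + 1)), |(α * x ^ (-α - 1)) * (SS k (1 + i) - TT k x)| :=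
      intervalIntegral.abs_integral_le_integral_abs (hastep i)
    have hmono : (∫ x in (a i)..(a (i + 1)), |(α * x ^ (-α - 1)) * (SS k (1 + i) - TT k x)|)
        ≤ ∫ x in (a i)..(a (i + 1)), 4 * (α * x ^ (-α - 1)) := by
      apply intervalIntegral.integral_mono_on (hastep i)
      · apply ContinuousOn.intervalIntegrable
        apply ContinuousOn.abs
        exact (continuousOn_const.mul (cont_pow' (ha1 i) (hastep i))).mul
          ((continuousOn_const.sub (TT_cont k).continuousOn))
      · exact (continuousOn_const.mul
          (continuousOn_const.mul (cont_pow' (ha1 i) (hastep i)))).intervalIntegrable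
      · intro x hx
        have hx0 : (0:ℝ) < x := lt_of_lt_of_le one_pos (le_trans (ha1 i) hx.1)
        have hnn : 0 ≤ α * x ^ (-α - 1) :=
          mul_nonneg hα0.le (Real.rpow_nonneg hx0.le _)
        rw [abs_mul, abs_of_nonneg hnn]
        have := hgi x hx
        nlinarith [abs_nonneg (SS k (1 + i) - TT k x)]
    have hconst : (∫ x in (a i)..(a (i + 1)), 4 * (α * x ^ (-α - 1)))
        = 4 * ((a i) ^ (-α) - (a (i + 1)) ^ (-α)) := by
      rw [intervalIntegral.integral_const_mul, ftc_H (ha1 i) (hastep i)]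
    calc |∫ x in (a i)..(a (i + 1)), (α * x ^ (-α - 1)) * (SS k (1 + i) - TT k x)|
        ≤ ∫ x in (a i)..(a (i + 1)), |(α * x ^ (-α - 1)) * (SS k (1 + i) - TT k x)| := habs
      _ ≤ ∫ x in (a i)..(a (i + 1)), 4 * (α * x ^ (-α - 1)) := hmono
      _ = 4 * ((a i) ^ (-α) - (a (i + 1)) ^ (-α)) := hconst
  -- assemble
  have hD : (∑ l ∈ Finset.Icc 1 (N + 1), Real.sin (k * l) / (l : ℝ) ^ α)
        - (∫ x in (1:ℝ)..m, Real.sin (k * x) / x ^ α)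
      = (SS k (N + 1) - TT k m) * m ^ (-α)
        + ∑ i ∈ Finset.range N,
            (SS k (1 + i) * ((a i) ^ (-α) - (a (i + 1)) ^ (-α)) - ∫ x in (a i)..(a (i + 1)), F x) := by
    rw [e1, e2, Finset.sum_sub_distrib]
    ring
  rw [hD]
  have hm0 : 0 ≤ m ^ (-α) := Real.rpow_nonneg (by linarith) _
  have hm1' : m ^ (-α) ≤ 1 :=
    Real.rpow_le_one_of_one_le_of_nonpos hm1 (by linarith)
  have hST : |SS k (N + 1) - TT k m| ≤ 3 := by
    have := ST_bound hk0 hkπ (N + 1)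
    rwa [show (((N + 1 : ℕ)) : ℝ) = m from hm.symm] at this
  have htel : (∑ i ∈ Finset.range N, ((a i) ^ (-α) - (a (i + 1)) ^ (-α)))
      = 1 - m ^ (-α) := by
    rw [Finset.sum_range_sub' (f := fun i => (a i) ^ (-α))]
    have ha0 : a 0 = 1 := by rw [ha]; norm_num
    have haN : a N = m := by rw [ha, hm]; push_cast; ring
    rw [ha0, haN, Real.one_rpow]
  have hsumb : |∑ i ∈ Finset.range N,
        (SS k (1 + i) * ((a i) ^ (-α) - (a (i + 1)) ^ (-α)) - ∫ x in (a i)..(a (i + 1)), F x)|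
      ≤ 4 * (1 - m ^ (-α)) := by
    calc |∑ i ∈ Finset.range N, _| ≤ ∑ i ∈ Finset.range N,
          |SS k (1 + i) * ((a i) ^ (-α) - (a (i + 1)) ^ (-α)) - ∫ x in (a i)..(a (i + 1)), F x| :=
        Finset.abs_sum_le_sum_abs _ _
      _ ≤ ∑ i ∈ Finset.range N, 4 * ((a i) ^ (-α) - (a (i + 1)) ^ (-α)) :=
        Finset.sum_le_sum hterm
      _ = 4 * (1 - m ^ (-α)) := by rw [← Finset.mul_sum, htel]
  calc |(SS k (N + 1) - TT k m) * m ^ (-α) + _|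
      ≤ |(SS k (N + 1) - TT k m) * m ^ (-α)| + |_| := abs_add_le _ _
    _ ≤ 3 * 1 + 4 * (1 - m ^ (-α)) := by
        refine add_le_add ?_ hsumb
        rw [abs_mul, abs_of_nonneg hm0]
        nlinarith [abs_nonneg (SS k (N + 1) - TT k m)]
    _ ≤ 7 := by nlinarith
end

section
/- Let α ∈ (0, 1). There exist constants 0 < c ≤ C and a positive integer N₀ such that for every even integer N ≥ N₀, c · N ≤ ∑_{n=0}^{N−1} |f_{α,N}((2n+1)π/N)| ≤ C · N, where f_{α,N}(k) = 2 ∑_{l=1}^{N/2−1} l^{−α} sin(k l) + (N/2)^{−α}. -/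
open Real Filter

open Finset

private lemma sumcos (θ : ℝ) (N : ℕ) :
    2 * Real.sin θ * ∑ n ∈ range N, Real.cos ((2 * (n : ℝ) + 1) * θ)
      = Real.sin (2 * (N : ℝ) * θ) := by
  rw [Finset.mul_sum]
  have h : ∀ n : ℕ, 2 * Real.sin θ * Real.cos ((2 * (n : ℝ) + 1) * θ)
      = Real.sin (2 * ((n : ℝ) + 1) * θ) - Real.sin (2 * (n : ℝ) * θ) := by
    intro n
    have e1 : 2 * ((n : ℝ) + 1) * θ = (2 * (n : ℝ) + 1) * θ + θ := by ring
    have e2 : 2 * (n : ℝ) * θ = (2 * (n : ℝ) + 1) * θ - θ := by ring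
    rw [e1, e2, Real.sin_add, Real.sin_sub]; ring
  calc ∑ n ∈ range N, 2 * Real.sin θ * Real.cos ((2 * (n : ℝ) + 1) * θ)
      = ∑ n ∈ range N, ((fun m : ℕ => Real.sin (2 * (m : ℝ) * θ)) (n + 1)
          - (fun m : ℕ => Real.sin (2 * (m : ℝ) * θ)) n) := by
        refine Finset.sum_congr rfl fun n _ => ?_
        simp only [h n]; push_cast; ring_nf
    _ = Real.sin (2 * (N : ℝ) * θ) - Real.sin (2 * 0 * θ) := by
        rw [Finset.sum_range_sub (fun m : ℕ => Real.sin (2 * (m : ℝ) * θ))]; norm_num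
    _ = Real.sin (2 * (N : ℝ) * θ) := by norm_num

private lemma sumsin (θ : ℝ) (N : ℕ) :
    2 * Real.sin θ * ∑ n ∈ range N, Real.sin ((2 * (n : ℝ) + 1) * θ)
      = 1 - Real.cos (2 * (N : ℝ) * θ) := by
  rw [Finset.mul_sum]
  have h : ∀ n : ℕ, 2 * Real.sin θ * Real.sin ((2 * (n : ℝ) + 1) * θ)
      = -Real.cos (2 * ((n : ℝ) + 1) * θ) - -Real.cos (2 * (n : ℝ) * θ) := by
    intro n
    have e1 : 2 * ((n : ℝ) + 1) * θ = (2 * (n : ℝ) + 1) * θ + θ := by ring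
    have e2 : 2 * (n : ℝ) * θ = (2 * (n : ℝ) + 1) * θ - θ := by ring
    rw [e1, e2, Real.cos_add, Real.cos_sub]; ring
  calc ∑ n ∈ range N, 2 * Real.sin θ * Real.sin ((2 * (n : ℝ) + 1) * θ)
      = ∑ n ∈ range N, ((fun m : ℕ => -Real.cos (2 * (m : ℝ) * θ)) (n + 1)
          - (fun m : ℕ => -Real.cos (2 * (m : ℝ) * θ)) n) := by
        refine Finset.sum_congr rfl fun n _ => ?_
        simp only [h n]; push_cast; ring_nf
    _ = -Real.cos (2 * (N : ℝ) * θ) - -Real.cos (2 * (0:ℕ) * θ) := by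
        rw [Finset.sum_range_sub (fun m : ℕ => -Real.cos (2 * (m : ℝ) * θ))]
    _ = 1 - Real.cos (2 * (N : ℝ) * θ) := by simp only [Nat.cast_zero, mul_zero, zero_mul, Real.cos_zero]; ring

private lemma coszero {N m : ℕ} (h1 : 1 ≤ m) (h2 : m < N) :
    ∑ n ∈ range N, Real.cos ((2 * (n : ℝ) + 1) * (π * m / N)) = 0 := by
  have hN : 0 < N := lt_of_le_of_lt (Nat.zero_le m) h2
  have hθpos : 0 < π * m / N := by positivity
  have hθlt : π * m / N < π := by
    rw [div_lt_iff₀ (by exact_mod_cast hN)]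
    have : (m : ℝ) < (N : ℝ) := by exact_mod_cast h2
    nlinarith [Real.pi_pos]
  have hs : 0 < Real.sin (π * m / N) := Real.sin_pos_of_pos_of_lt_pi hθpos hθlt
  have key := sumcos (π * m / N) N
  have harg : 2 * (N : ℝ) * (π * m / N) = (2 * m : ℕ) * π := by
    push_cast; field_simp
  rw [harg, Real.sin_nat_mul_pi] at key
  have h2s : 2 * Real.sin (π * m / N) ≠ 0 := by positivity
  exact (mul_eq_zero.mp key).resolve_left h2s

private lemma sinzero {N m : ℕ} (h1 : 1 ≤ m) (h2 : m < N) :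
    ∑ n ∈ range N, Real.sin ((2 * (n : ℝ) + 1) * (π * m / N)) = 0 := by
  have hN : 0 < N := lt_of_le_of_lt (Nat.zero_le m) h2
  have hθpos : 0 < π * m / N := by positivity
  have hθlt : π * m / N < π := by
    rw [div_lt_iff₀ (by exact_mod_cast hN)]
    have : (m : ℝ) < (N : ℝ) := by exact_mod_cast h2
    nlinarith [Real.pi_pos]
  have hs : 0 < Real.sin (π * m / N) := Real.sin_pos_of_pos_of_lt_pi hθpos hθlt
  have key := sumsin (π * m / N) N
  have harg : 2 * (N : ℝ) * (π * m / N) = (m : ℕ) * (2 * π) := by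
    push_cast; field_simp
  rw [harg, Real.cos_nat_mul_two_pi, sub_self] at key
  have h2s : 2 * Real.sin (π * m / N) ≠ 0 := by positivity
  exact (mul_eq_zero.mp key).resolve_left h2s

private noncomputable def Fterm (α : ℝ) (N n : ℕ) : ℝ :=
  2 * (∑ l ∈ Finset.Icc 1 (N / 2 - 1),
      (l : ℝ) ^ (-α) *
        Real.sin ((2 * (n : ℝ) + 1) * Real.pi / (N : ℝ) * (l : ℝ))) +
    ((N : ℝ) / 2) ^ (-α)

private lemma inner_orth {N : ℕ} (hN : 4 ≤ N) {l : ℕ} (hl : l ∈ Finset.Icc 1 (N / 2 - 1)) :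
    ∑ n ∈ range N, Real.sin ((2 * (n : ℝ) + 1) * π / N * l) * Real.sin ((2 * (n : ℝ) + 1) * π / N)
      = if l = 1 then (N : ℝ) / 2 else 0 := by
  obtain ⟨hl1, hl2⟩ := Finset.mem_Icc.mp hl
  have hN0 : (N : ℝ) ≠ 0 := by positivity
  have hlN : l + 1 < N := by omega
  have hterm : ∀ n : ℕ,
      Real.sin ((2 * (n : ℝ) + 1) * π / N * l) * Real.sin ((2 * (n : ℝ) + 1) * π / N)
        = (Real.cos ((2 * (n : ℝ) + 1) * (π * ((l : ℝ) - 1) / N))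
            - Real.cos ((2 * (n : ℝ) + 1) * (π * ((l : ℝ) + 1) / N))) / 2 := by
    intro n
    have e1 : (2 * (n : ℝ) + 1) * (π * ((l : ℝ) - 1) / N)
        = (2 * (n : ℝ) + 1) * π / N * l - (2 * (n : ℝ) + 1) * π / N := by field_simp
    have e2 : (2 * (n : ℝ) + 1) * (π * ((l : ℝ) + 1) / N)
        = (2 * (n : ℝ) + 1) * π / N * l + (2 * (n : ℝ) + 1) * π / N := by field_simp
    rw [e1, e2, Real.cos_sub, Real.cos_add]; ring
  simp only [hterm]
  rw [← Finset.sum_div, Finset.sum_sub_distrib]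
  have hplus : ∑ n ∈ range N, Real.cos ((2 * (n : ℝ) + 1) * (π * ((l : ℝ) + 1) / N)) = 0 := by
    have : ((l : ℝ) + 1) = ((l + 1 : ℕ) : ℝ) := by push_cast; ring
    rw [this]
    exact coszero (by omega) hlN
  rw [hplus]
  rcases eq_or_ne l 1 with h1 | h1
  · subst h1
    norm_num
  · rw [if_neg h1]
    have hc : ((l : ℝ) - 1) = ((l - 1 : ℕ) : ℝ) := by
      have : (1:ℕ) ≤ l := hl1
      push_cast [this]; ring
    rw [hc, coszero (by omega) (by omega)]
    norm_num

private lemma lower_bound {α : ℝ} {N : ℕ} (hN : 4 ≤ N) :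
    (N : ℝ) ≤ ∑ n ∈ range N, |Fterm α N n| := by
  have hN0 : (N : ℝ) ≠ 0 := by positivity
  have key : ∑ n ∈ range N, Fterm α N n * Real.sin ((2 * (n : ℝ) + 1) * π / N) = N := by
    have expand : ∀ n : ℕ, Fterm α N n * Real.sin ((2 * (n : ℝ) + 1) * π / N)
        = (∑ l ∈ Finset.Icc 1 (N / 2 - 1),
            2 * ((l : ℝ) ^ (-α) * Real.sin ((2 * (n : ℝ) + 1) * π / N * l))
              * Real.sin ((2 * (n : ℝ) + 1) * π / N))
          + ((N : ℝ) / 2) ^ (-α) * Real.sin ((2 * (n : ℝ) + 1) * π / N) := by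
      intro n; unfold Fterm
      rw [add_mul, Finset.mul_sum, Finset.sum_mul]
    simp only [expand]
    rw [Finset.sum_add_distrib]
    have h2 : ∑ n ∈ range N, ((N : ℝ) / 2) ^ (-α) * Real.sin ((2 * (n : ℝ) + 1) * π / N) = 0 := by
      rw [← Finset.mul_sum]
      have e : ∀ n ∈ range N, Real.sin ((2 * (n : ℝ) + 1) * π / N)
          = Real.sin ((2 * (n : ℝ) + 1) * (π * (1 : ℕ) / N)) := by
        intro n _; congr 1; push_cast; ring
      rw [Finset.sum_congr rfl e, sinzero le_rfl (by omega), mul_zero]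
    rw [h2, add_zero, Finset.sum_comm]
    have hrow : ∀ l ∈ Finset.Icc 1 (N / 2 - 1),
        ∑ n ∈ range N, 2 * ((l : ℝ) ^ (-α) * Real.sin ((2 * (n : ℝ) + 1) * π / N * l))
            * Real.sin ((2 * (n : ℝ) + 1) * π / N)
        = if l = 1 then (N : ℝ) else 0 := by
      intro l hl
      have : ∑ n ∈ range N, 2 * ((l : ℝ) ^ (-α) * Real.sin ((2 * (n : ℝ) + 1) * π / N * l))
            * Real.sin ((2 * (n : ℝ) + 1) * π / N)
          = 2 * (l : ℝ) ^ (-α) * ∑ n ∈ range N,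
              Real.sin ((2 * (n : ℝ) + 1) * π / N * l) * Real.sin ((2 * (n : ℝ) + 1) * π / N) := by
        rw [Finset.mul_sum]; refine Finset.sum_congr rfl fun n _ => by ring
      rw [this, inner_orth hN hl]
      rcases eq_or_ne l 1 with h1 | h1
      · subst h1; simp [Real.one_rpow]; field_simp
      · simp [h1]
    rw [Finset.sum_congr rfl hrow, Finset.sum_ite_eq' (Finset.Icc 1 (N / 2 - 1)) 1 (fun _ => (N : ℝ))]
    rw [if_pos (Finset.mem_Icc.mpr ⟨le_rfl, by omega⟩)]
  calc (N : ℝ) = ∑ n ∈ range N, Fterm α N n * Real.sin ((2 * (n : ℝ) + 1) * π / N) := key.symm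
    _ ≤ ∑ n ∈ range N, |Fterm α N n| := by
        refine Finset.sum_le_sum fun n _ => ?_
        calc Fterm α N n * Real.sin ((2 * (n : ℝ) + 1) * π / N)
            ≤ |Fterm α N n * Real.sin ((2 * (n : ℝ) + 1) * π / N)| := le_abs_self _
          _ = |Fterm α N n| * |Real.sin ((2 * (n : ℝ) + 1) * π / N)| := abs_mul _ _
          _ ≤ |Fterm α N n| * 1 := by
              exact mul_le_mul_of_nonneg_left (Real.abs_sin_le_one _) (abs_nonneg _)
          _ = |Fterm α N n| := mul_one _

private lemma sin_partial {k : ℝ} (hs : Real.sin (k / 2) ≠ 0) (c : ℕ) (n : ℕ) :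
    |∑ i ∈ range n, Real.sin (k * ((c : ℝ) + 1 + i))| ≤ 1 / |Real.sin (k / 2)| := by
  have h : ∀ i : ℕ, 2 * Real.sin (k / 2) * Real.sin (k * ((c : ℝ) + 1 + i))
      = (fun m : ℕ => -Real.cos (k * ((c : ℝ) + m) + k / 2)) (i + 1)
        - (fun m : ℕ => -Real.cos (k * ((c : ℝ) + m) + k / 2)) i := by
    intro i
    simp only
    have e1 : k * ((c : ℝ) + (i + 1 : ℕ)) + k / 2 = k * ((c : ℝ) + 1 + i) + k / 2 := by
      push_cast; ring
    have e2 : k * ((c : ℝ) + i) + k / 2 = k * ((c : ℝ) + 1 + i) - k / 2 := by ring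
    rw [e1, e2, Real.cos_add, Real.cos_sub]; ring
  have key : 2 * Real.sin (k / 2) * ∑ i ∈ range n, Real.sin (k * ((c : ℝ) + 1 + i))
      = -Real.cos (k * ((c : ℝ) + n) + k / 2) + Real.cos (k * ((c : ℝ) + (0 : ℕ)) + k / 2) := by
    rw [Finset.mul_sum, Finset.sum_congr rfl fun i _ => h i,
      Finset.sum_range_sub (fun m : ℕ => -Real.cos (k * ((c : ℝ) + m) + k / 2))]
    ring
  have habs : |2 * Real.sin (k / 2)| * |∑ i ∈ range n, Real.sin (k * ((c : ℝ) + 1 + i))| ≤ 2 := by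
    rw [← abs_mul, key]
    calc |(-Real.cos (k * ((c : ℝ) + n) + k / 2)) + Real.cos (k * ((c : ℝ) + (0 : ℕ)) + k / 2)|
        ≤ |(-Real.cos (k * ((c : ℝ) + n) + k / 2))| + |Real.cos (k * ((c : ℝ) + (0 : ℕ)) + k / 2)| :=
          abs_add_le _ _
      _ ≤ 1 + 1 := by
          rw [abs_neg]
          exact add_le_add (Real.abs_cos_le_one _) (Real.abs_cos_le_one _)
      _ = 2 := by norm_num
  have h2s : 0 < |2 * Real.sin (k / 2)| := by
    rw [abs_mul]
    positivity
  rw [le_div_iff₀ (abs_pos.mpr hs)]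
  calc |∑ i ∈ range n, Real.sin (k * ((c : ℝ) + 1 + i))| * |Real.sin (k / 2)|
      = (|2 * Real.sin (k / 2)| * |∑ i ∈ range n, Real.sin (k * ((c : ℝ) + 1 + i))|) / 2 := by
        rw [abs_mul]; rw [abs_two]; ring
    _ ≤ 2 / 2 := by linarith
    _ = 1 := by norm_num

private lemma abel_bound (f g : ℕ → ℝ) (S : ℝ) (hS : 0 ≤ S)
    (hanti : ∀ i, f (i + 1) ≤ f i) (hpos : ∀ i, 0 ≤ f i)
    (hg : ∀ m : ℕ, |∑ i ∈ range m, g i| ≤ S) (n : ℕ) :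
    |∑ i ∈ range n, f i * g i| ≤ f 0 * S := by
  rcases Nat.eq_zero_or_pos n with rfl | hn
  · simpa using mul_nonneg (hpos 0) hS
  have hmono : ∀ m : ℕ, f m ≤ f 0 := by
    intro m
    induction m with
    | zero => exact le_rfl
    | succ m ih => exact (hanti m).trans ih
  have hby := Finset.sum_range_by_parts f g n
  simp only [smul_eq_mul] at hby
  rw [hby]
  have h1 : |f (n - 1) * ∑ i ∈ range n, g i| ≤ f (n - 1) * S := by
    rw [abs_mul, abs_of_nonneg (hpos _)]
    exact mul_le_mul_of_nonneg_left (hg n) (hpos _)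
  have h2 : |∑ i ∈ range (n - 1), (f (i + 1) - f i) * ∑ j ∈ range (i + 1), g j|
      ≤ (f 0 - f (n - 1)) * S := by
    calc |∑ i ∈ range (n - 1), (f (i + 1) - f i) * ∑ j ∈ range (i + 1), g j|
        ≤ ∑ i ∈ range (n - 1), |(f (i + 1) - f i) * ∑ j ∈ range (i + 1), g j| :=
          Finset.abs_sum_le_sum_abs _ _
      _ ≤ ∑ i ∈ range (n - 1), (f i - f (i + 1)) * S := by
          refine Finset.sum_le_sum fun i _ => ?_
          rw [abs_mul, abs_sub_comm, abs_of_nonneg (by linarith [hanti i])]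
          exact mul_le_mul_of_nonneg_left (hg _) (by linarith [hanti i])
      _ = (f 0 - f (n - 1)) * S := by
          rw [← Finset.sum_mul, Finset.sum_range_sub' f]
  calc |f (n - 1) * ∑ i ∈ range n, g i
        - ∑ i ∈ range (n - 1), (f (i + 1) - f i) * ∑ j ∈ range (i + 1), g j|
      ≤ |f (n - 1) * ∑ i ∈ range n, g i|
        + |∑ i ∈ range (n - 1), (f (i + 1) - f i) * ∑ j ∈ range (i + 1), g j| := abs_sub _ _
    _ ≤ f (n - 1) * S + (f 0 - f (n - 1)) * S := add_le_add h1 h2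
    _ = f 0 * S := by ring

private lemma pointwise {α : ℝ} (hα : α ∈ Set.Ioo (0 : ℝ) 1) {k : ℝ}
    (hk0 : 0 < k) (hkπ : k ≤ π) (M : ℕ) :
    |∑ l ∈ Finset.Icc 1 M, (l : ℝ) ^ (-α) * Real.sin (k * l)| ≤ (1 + π) * k ^ (α - 1) := by
  obtain ⟨hα0, hα1⟩ := hα
  have hkinv : (0 : ℝ) < 1 / k := by positivity
  set P : ℕ := min (Nat.floor (1 / k)) M with hP
  have hPM : P ≤ M := min_le_right _ _
  have hPk : (P : ℝ) ≤ 1 / k := le_trans (by exact_mod_cast Nat.cast_le.mpr (min_le_left _ _))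
    (Nat.floor_le hkinv.le)
  have hsin2 : 0 < Real.sin (k / 2) :=
    Real.sin_pos_of_pos_of_lt_pi (by linarith) (by linarith [Real.pi_pos])
  have hsinlb : k / π ≤ Real.sin (k / 2) := by
    have := Real.mul_le_sin (x := k / 2) (by linarith) (by linarith)
    calc k / π = 2 / π * (k / 2) := by field_simp
      _ ≤ Real.sin (k / 2) := this
  -- split the sum
  have hsplit : ∑ l ∈ Finset.Icc 1 M, (l : ℝ) ^ (-α) * Real.sin (k * l)
      = (∑ l ∈ Finset.Ioc 0 P, (l : ℝ) ^ (-α) * Real.sin (k * l))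
        + ∑ l ∈ Finset.Ioc P M, (l : ℝ) ^ (-α) * Real.sin (k * l) := by
    rw [show Finset.Icc 1 M = Finset.Ioc 0 M from Finset.Icc_add_one_left_eq_Ioc 0 M]
    exact (Finset.sum_Ioc_consecutive _ (Nat.zero_le P) hPM).symm
  -- part 1
  have hpart1 : |∑ l ∈ Finset.Ioc 0 P, (l : ℝ) ^ (-α) * Real.sin (k * l)| ≤ k ^ (α - 1) := by
    calc |∑ l ∈ Finset.Ioc 0 P, (l : ℝ) ^ (-α) * Real.sin (k * l)|
        ≤ ∑ l ∈ Finset.Ioc 0 P, |(l : ℝ) ^ (-α) * Real.sin (k * l)| :=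
          Finset.abs_sum_le_sum_abs _ _
      _ ≤ ∑ l ∈ Finset.Ioc 0 P, k * (1 / k) ^ (1 - α) := by
          refine Finset.sum_le_sum fun l hl => ?_
          obtain ⟨hl0, hlP⟩ := Finset.mem_Ioc.mp hl
          have hl0' : (0 : ℝ) < l := by exact_mod_cast hl0
          rw [abs_mul, abs_of_nonneg (Real.rpow_nonneg hl0'.le _)]
          calc (l : ℝ) ^ (-α) * |Real.sin (k * l)|
              ≤ (l : ℝ) ^ (-α) * (k * l) := by
                refine mul_le_mul_of_nonneg_left ?_ (Real.rpow_nonneg hl0'.le _)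
                calc |Real.sin (k * l)| ≤ |k * l| := Real.abs_sin_le_abs
                  _ = k * l := abs_of_nonneg (by positivity)
            _ = k * (l : ℝ) ^ (1 - α) := by
                rw [show (1 : ℝ) - α = -α + 1 by ring, Real.rpow_add hl0', Real.rpow_one]; ring
            _ ≤ k * (1 / k) ^ (1 - α) := by
                refine mul_le_mul_of_nonneg_left ?_ hk0.le
                refine Real.rpow_le_rpow hl0'.le ?_ (by linarith)
                calc (l : ℝ) ≤ (P : ℝ) := by exact_mod_cast hlP
                  _ ≤ 1 / k := hPk
      _ = P * (k * (1 / k) ^ (1 - α)) := by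
          rw [Finset.sum_const, Nat.card_Ioc, Nat.sub_zero, nsmul_eq_mul]
      _ ≤ (1 / k) * (k * (1 / k) ^ (1 - α)) := by
          refine mul_le_mul_of_nonneg_right hPk (by positivity)
      _ = k ^ (α - 1) := by
          rw [show (1 / k) * (k * (1 / k) ^ (1 - α)) = (1 / k) ^ (1 - α) by field_simp]
          rw [one_div, Real.inv_rpow hk0.le, ← Real.rpow_neg hk0.le,
            show -(1 - α) = α - 1 by ring]
  -- part 2
  have hpart2 : |∑ l ∈ Finset.Ioc P M, (l : ℝ) ^ (-α) * Real.sin (k * l)|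
      ≤ π * k ^ (α - 1) := by
    rcases eq_or_lt_of_le hPM with hPeqM | hPltM
    · rw [hPeqM]
      simp only [Finset.Ioc_self, Finset.sum_empty, abs_zero]
      positivity
    · -- here P = ⌊1/k⌋ and 1/k < P + 1
      have hPfloor : P = Nat.floor (1 / k) := by
        rcases min_cases (Nat.floor (1 / k)) M with ⟨h, _⟩ | ⟨h, hc⟩
        · exact h
        · omega
      have hkP1 : 1 / k < (P : ℝ) + 1 := by
        rw [hPfloor]
        exact_mod_cast Nat.lt_floor_add_one (1 / k)
      -- reindex
      have hreindex : ∑ l ∈ Finset.Ioc P M, (l : ℝ) ^ (-α) * Real.sin (k * l)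
          = ∑ i ∈ range (M - P), ((P + 1 + i : ℕ) : ℝ) ^ (-α) * Real.sin (k * ((P : ℝ) + 1 + i)) := by
        rw [← Finset.Ico_add_one_add_one_eq_Ioc, Finset.sum_Ico_eq_sum_range]
        have : M + 1 - (P + 1) = M - P := by omega
        rw [this]
        refine Finset.sum_congr rfl fun i _ => ?_
        have : ((P + 1 + i : ℕ) : ℝ) = (P : ℝ) + 1 + i := by push_cast; ring
        rw [show P + 1 + i = P + 1 + i from rfl, this]
      rw [hreindex]
      have hS : (0 : ℝ) ≤ 1 / |Real.sin (k / 2)| := by positivity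
      have habel := abel_bound (fun i => ((P + 1 + i : ℕ) : ℝ) ^ (-α))
        (fun i => Real.sin (k * ((P : ℝ) + 1 + i))) (1 / |Real.sin (k / 2)|) hS
        (fun i => by
          refine Real.rpow_le_rpow_of_nonpos (by positivity) ?_ (by linarith)
          push_cast; linarith)
        (fun i => Real.rpow_nonneg (by positivity) _)
        (fun m => sin_partial hsin2.ne' P m) (M - P)
      simp only [Nat.add_zero] at habel
      refine le_trans habel ?_
      have h1 : ((P + 1 : ℕ) : ℝ) ^ (-α) ≤ k ^ α := by
        have : (1 / k) ^ (-α) = k ^ α := by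
          rw [one_div, Real.inv_rpow hk0.le, ← Real.rpow_neg hk0.le, neg_neg]
        rw [← this]
        refine Real.rpow_le_rpow_of_nonpos hkinv ?_ (by linarith)
        push_cast
        linarith
      have h2 : 1 / |Real.sin (k / 2)| ≤ π / k := by
        rw [abs_of_pos hsin2]
        rw [div_le_div_iff₀ hsin2 hk0]
        calc 1 * k = (k / π) * π := by field_simp
          _ ≤ Real.sin (k / 2) * π := mul_le_mul_of_nonneg_right hsinlb Real.pi_pos.le
          _ = π * Real.sin (k / 2) := mul_comm _ _
      calc ((P + 1 + 0 : ℕ) : ℝ) ^ (-α) * (1 / |Real.sin (k / 2)|)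
          ≤ k ^ α * (π / k) := by
            refine mul_le_mul ?_ h2 hS (by positivity)
            simpa using h1
        _ = π * k ^ (α - 1) := by
            rw [show α - 1 = α + (-1) by ring, Real.rpow_add hk0, Real.rpow_neg_one]
            ring
  rw [hsplit]
  calc |(∑ l ∈ Finset.Ioc 0 P, (l : ℝ) ^ (-α) * Real.sin (k * l))
        + ∑ l ∈ Finset.Ioc P M, (l : ℝ) ^ (-α) * Real.sin (k * l)|
      ≤ |∑ l ∈ Finset.Ioc 0 P, (l : ℝ) ^ (-α) * Real.sin (k * l)|
        + |∑ l ∈ Finset.Ioc P M, (l : ℝ) ^ (-α) * Real.sin (k * l)| := abs_add_le _ _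
    _ ≤ k ^ (α - 1) + π * k ^ (α - 1) := add_le_add hpart1 hpart2
    _ = (1 + π) * k ^ (α - 1) := by ring

private lemma rpow_sum_le {α : ℝ} (hα0 : 0 < α) (hα1 : α < 1) (N : ℕ) :
    ∑ n ∈ range N, ((n : ℝ) + 1) ^ (α - 1) ≤ (N : ℝ) ^ α / α := by
  rw [le_div_iff₀ hα0]
  have hterm : ∀ n : ℕ, ((n : ℝ) + 1) ^ (α - 1) * α ≤ ((n + 1 : ℕ) : ℝ) ^ α - ((n : ℕ) : ℝ) ^ α := by
    intro n
    have hn1 : (0 : ℝ) < (n : ℝ) + 1 := by positivity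
    have hber := rpow_one_add_le_one_add_mul_self
      (s := -(1 / ((n : ℝ) + 1))) (by
        rw [neg_le, neg_neg]
        rw [div_le_one hn1]; linarith [Nat.cast_nonneg (α := ℝ) n])
      (p := α) hα0.le hα1.le
    have h1s : 1 + -(1 / ((n : ℝ) + 1)) = (n : ℝ) / ((n : ℝ) + 1) := by field_simp; ring
    rw [h1s] at hber
    -- multiply by ((n:ℝ)+1)^α
    have hpow : (0 : ℝ) ≤ ((n : ℝ) + 1) ^ α := Real.rpow_nonneg hn1.le _
    have hmul := mul_le_mul_of_nonneg_right hber hpow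
    have hL : ((n : ℝ) / ((n : ℝ) + 1)) ^ α * ((n : ℝ) + 1) ^ α = (n : ℝ) ^ α := by
      rw [← Real.mul_rpow (by positivity) hn1.le, div_mul_cancel₀ _ hn1.ne']
    have hR : (1 + α * -(1 / ((n : ℝ) + 1))) * ((n : ℝ) + 1) ^ α
        = ((n : ℝ) + 1) ^ α - α * ((n : ℝ) + 1) ^ (α - 1) := by
      have : ((n : ℝ) + 1) ^ (α - 1) = ((n : ℝ) + 1) ^ α / ((n : ℝ) + 1) := by
        rw [show α - 1 = α + (-1) by ring, Real.rpow_add hn1, Real.rpow_neg_one]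
        ring
      rw [this]; field_simp; ring
    rw [hL, hR] at hmul
    push_cast
    linarith
  calc (∑ n ∈ range N, ((n : ℝ) + 1) ^ (α - 1)) * α
      = ∑ n ∈ range N, ((n : ℝ) + 1) ^ (α - 1) * α := Finset.sum_mul _ _ _
    _ ≤ ∑ n ∈ range N, (((n + 1 : ℕ) : ℝ) ^ α - ((n : ℕ) : ℝ) ^ α) :=
        Finset.sum_le_sum fun n _ => hterm n
    _ = ((N : ℕ) : ℝ) ^ α - ((0 : ℕ) : ℝ) ^ α :=
        Finset.sum_range_sub (fun n : ℕ => ((n : ℕ) : ℝ) ^ α) N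
    _ ≤ (N : ℝ) ^ α := by
        rw [Nat.cast_zero, Real.zero_rpow hα0.ne']
        simp

private lemma sin_reflect {N n l : ℕ} (hn : n < N) (hN : 0 < N) :
    Real.sin ((2 * (n : ℝ) + 1) * π / N * l)
      = -Real.sin ((2 * ((N - 1 - n : ℕ) : ℝ) + 1) * π / N * l) := by
  have hc : ((N - 1 - n : ℕ) : ℝ) = (N : ℝ) - 1 - n := by
    have h1 : N - 1 - n = N - (1 + n) := by omega
    rw [h1, Nat.cast_sub (by omega : 1 + n ≤ N)]
    push_cast; ring
  have hN0 : (N : ℝ) ≠ 0 := by positivity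
  have harg : (2 * ((N - 1 - n : ℕ) : ℝ) + 1) * π / N * l
      = (l : ℕ) * (2 * π) - (2 * (n : ℝ) + 1) * π / N * l := by
    rw [hc]; field_simp; ring
  rw [harg, Real.sin_sub]
  rw [show ((l : ℕ) : ℝ) * (2 * π) = ((2 * l : ℕ) : ℝ) * π by push_cast; ring]
  rw [Real.sin_nat_mul_pi]
  rw [show ((2 * l : ℕ) : ℝ) * π = ((l : ℕ) : ℝ) * (2 * π) by push_cast; ring]
  rw [Real.cos_nat_mul_two_pi]
  ring

private lemma upper_bound {α : ℝ} (hα : α ∈ Set.Ioo (0 : ℝ) 1) {N : ℕ} (hN : 4 ≤ N) :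
    ∑ n ∈ range N, |Fterm α N n| ≤ (1 + 4 * (1 + π) / α) * N := by
  obtain ⟨hα0, hα1⟩ := hα
  have hN0 : (0 : ℝ) < N := by positivity
  have hN4 : (4 : ℝ) ≤ N := by exact_mod_cast hN
  set yn : ℕ → ℝ := fun m => ((2 * (m : ℝ) + 1) * π / N) ^ (α - 1) with hyn
  have hynn : ∀ m : ℕ, 0 ≤ yn m := fun m => Real.rpow_nonneg (by positivity) _
  -- Step A : pointwise bound on each |Fterm|
  have hstepA : ∀ n ∈ range N, |Fterm α N n| ≤ 1 + 2 * ((1 + π) * yn (min n (N - 1 - n))) := by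
    intro n hn
    have hnN : n < N := Finset.mem_range.mp hn
    set m := min n (N - 1 - n) with hm
    have hmN : 2 * m + 1 ≤ N := by omega
    have hk0 : 0 < (2 * (m : ℝ) + 1) * π / N := by positivity
    have hkπ : (2 * (m : ℝ) + 1) * π / N ≤ π := by
      rw [div_le_iff₀ hN0]
      have h1 : (2 * (m : ℝ) + 1) ≤ N := by exact_mod_cast hmN
      nlinarith [Real.pi_pos]
    have hgabs : |∑ l ∈ Finset.Icc 1 (N / 2 - 1),
          (l : ℝ) ^ (-α) * Real.sin ((2 * (n : ℝ) + 1) * π / N * l)|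
        = |∑ l ∈ Finset.Icc 1 (N / 2 - 1),
          (l : ℝ) ^ (-α) * Real.sin ((2 * (m : ℝ) + 1) * π / N * l)| := by
      rcases min_cases n (N - 1 - n) with ⟨h1, _⟩ | ⟨h1, _⟩
      · rw [hm, h1]
      · rw [hm, h1]
        have : ∑ l ∈ Finset.Icc 1 (N / 2 - 1),
              (l : ℝ) ^ (-α) * Real.sin ((2 * (n : ℝ) + 1) * π / N * l)
            = -∑ l ∈ Finset.Icc 1 (N / 2 - 1),
              (l : ℝ) ^ (-α) * Real.sin ((2 * ((N - 1 - n : ℕ) : ℝ) + 1) * π / N * l) := by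
          rw [← Finset.sum_neg_distrib]
          refine Finset.sum_congr rfl fun l _ => ?_
          rw [sin_reflect hnN (by omega)]
          ring
        rw [this, abs_neg]
    have hpt := pointwise ⟨hα0, hα1⟩ hk0 hkπ (N / 2 - 1)
    have hb1 : ((N : ℝ) / 2) ^ (-α) ≤ 1 :=
      Real.rpow_le_one_of_one_le_of_nonpos (by linarith) (by linarith)
    have hbpos : (0 : ℝ) ≤ ((N : ℝ) / 2) ^ (-α) := Real.rpow_nonneg (by linarith) _
    calc |Fterm α N n|
        ≤ 2 * |∑ l ∈ Finset.Icc 1 (N / 2 - 1),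
            (l : ℝ) ^ (-α) * Real.sin ((2 * (n : ℝ) + 1) * π / N * l)|
          + ((N : ℝ) / 2) ^ (-α) := by
          unfold Fterm
          calc |2 * (∑ l ∈ Finset.Icc 1 (N / 2 - 1),
                (l : ℝ) ^ (-α) * Real.sin ((2 * (n : ℝ) + 1) * π / N * l))
                + ((N : ℝ) / 2) ^ (-α)|
              ≤ |2 * (∑ l ∈ Finset.Icc 1 (N / 2 - 1),
                  (l : ℝ) ^ (-α) * Real.sin ((2 * (n : ℝ) + 1) * π / N * l))|
                + |((N : ℝ) / 2) ^ (-α)| := abs_add_le _ _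
            _ = 2 * |∑ l ∈ Finset.Icc 1 (N / 2 - 1),
                  (l : ℝ) ^ (-α) * Real.sin ((2 * (n : ℝ) + 1) * π / N * l)|
                + ((N : ℝ) / 2) ^ (-α) := by
                rw [abs_mul, abs_two, abs_of_nonneg hbpos]
      _ ≤ 2 * ((1 + π) * yn m) + 1 := by
          rw [hgabs]
          have := hpt
          refine add_le_add (mul_le_mul_of_nonneg_left ?_ (by norm_num)) hb1
          exact this
      _ = 1 + 2 * ((1 + π) * yn m) := by ring
  -- Step B + C : sum of yn (min ...)
  have hstepB : ∑ n ∈ range N, yn (min n (N - 1 - n)) ≤ 2 * ((N : ℝ) / α) := by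
    have hsplit : ∀ n : ℕ, yn (min n (N - 1 - n)) ≤ yn n + yn (N - 1 - n) := by
      intro n
      rcases min_cases n (N - 1 - n) with ⟨h1, _⟩ | ⟨h1, _⟩ <;> rw [h1]
      · linarith [hynn (N - 1 - n)]
      · linarith [hynn n]
    have hrefl : ∑ n ∈ range N, yn (N - 1 - n) = ∑ n ∈ range N, yn n :=
      Finset.sum_range_reflect yn N
    have hyn_le : ∀ n : ℕ, yn n ≤ ((n : ℝ) + 1) ^ (α - 1) * (N : ℝ) ^ (1 - α) := by
      intro n
      have h1 : ((n : ℝ) + 1) / N ≤ (2 * (n : ℝ) + 1) * π / N := by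
        have : (n : ℝ) + 1 ≤ (2 * (n : ℝ) + 1) * π := by
          nlinarith [Real.pi_gt_three, Nat.cast_nonneg (α := ℝ) n]
        gcongr
      have h2 : yn n ≤ (((n : ℝ) + 1) / N) ^ (α - 1) :=
        Real.rpow_le_rpow_of_nonpos (by positivity) h1 (by linarith)
      refine h2.trans (le_of_eq ?_)
      rw [Real.div_rpow (by positivity) hN0.le,
        show α - 1 = -(1 - α) by ring, Real.rpow_neg hN0.le, div_eq_mul_inv, inv_inv,
        show -(1 - α) = α - 1 by ring]
    calc ∑ n ∈ range N, yn (min n (N - 1 - n))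
        ≤ ∑ n ∈ range N, (yn n + yn (N - 1 - n)) :=
          Finset.sum_le_sum fun n _ => hsplit n
      _ = ∑ n ∈ range N, yn n + ∑ n ∈ range N, yn (N - 1 - n) := Finset.sum_add_distrib
      _ = 2 * ∑ n ∈ range N, yn n := by rw [hrefl]; ring
      _ ≤ 2 * ((N : ℝ) / α) := by
          have hsum : ∑ n ∈ range N, yn n ≤ (N : ℝ) / α := by
            calc ∑ n ∈ range N, yn n
                ≤ ∑ n ∈ range N, ((n : ℝ) + 1) ^ (α - 1) * (N : ℝ) ^ (1 - α) :=
                  Finset.sum_le_sum fun n _ => hyn_le n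
              _ = (∑ n ∈ range N, ((n : ℝ) + 1) ^ (α - 1)) * (N : ℝ) ^ (1 - α) :=
                  (Finset.sum_mul _ _ _).symm
              _ ≤ ((N : ℝ) ^ α / α) * (N : ℝ) ^ (1 - α) := by
                  refine mul_le_mul_of_nonneg_right (rpow_sum_le hα0 hα1 N)
                    (Real.rpow_nonneg hN0.le _)
              _ = (N : ℝ) / α := by
                  rw [div_mul_eq_mul_div, ← Real.rpow_add hN0]
                  norm_num
          linarith
  -- combine
  calc ∑ n ∈ range N, |Fterm α N n|
      ≤ ∑ n ∈ range N, (1 + 2 * ((1 + π) * yn (min n (N - 1 - n)))) :=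
        Finset.sum_le_sum hstepA
    _ = (N : ℝ) + 2 * (1 + π) * ∑ n ∈ range N, yn (min n (N - 1 - n)) := by
        rw [Finset.sum_add_distrib, Finset.sum_const, Finset.card_range, nsmul_eq_mul, mul_one]
        congr 1
        rw [Finset.mul_sum]
        exact Finset.sum_congr rfl fun n _ => by ring
    _ ≤ (N : ℝ) + 2 * (1 + π) * (2 * ((N : ℝ) / α)) := by
        refine add_le_add_right (mul_le_mul_of_nonneg_left hstepB (by positivity)) _
    _ = (1 + 4 * (1 + π) / α) * N := by
        field_simp
        ring

/-- For `α ∈ (0,1)` the quantity `γ_α(N) = ∑_k |f_{α,N}(k)|`, with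
`f_{α,N}(k) = 2 ∑_{l=1}^{N/2-1} l^{-α} sin(kl) + (N/2)^{-α}` and `k` running over
the anti-periodic momenta `(2n+1)π/N`, scales linearly in `N`: there are
`0 < c ≤ C` and `N₀` such that `c N ≤ γ_α(N) ≤ C N` for all even `N ≥ N₀`. -/
theorem stmt_19 (α : ℝ) (hα : α ∈ Set.Ioo (0 : ℝ) 1) :
    ∃ c C : ℝ, 0 < c ∧ c ≤ C ∧ ∃ N₀ : ℕ, 0 < N₀ ∧
      ∀ N : ℕ, N₀ ≤ N → Even N →
        c * N ≤
          (∑ n ∈ Finset.range N,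
            |2 * (∑ l ∈ Finset.Icc 1 (N / 2 - 1),
                (l : ℝ) ^ (-α) *
                  Real.sin ((2 * (n : ℝ) + 1) * Real.pi / (N : ℝ) * (l : ℝ))) +
              ((N : ℝ) / 2) ^ (-α)|) ∧
          (∑ n ∈ Finset.range N,
            |2 * (∑ l ∈ Finset.Icc 1 (N / 2 - 1),
                (l : ℝ) ^ (-α) *
                  Real.sin ((2 * (n : ℝ) + 1) * Real.pi / (N : ℝ) * (l : ℝ))) +
              ((N : ℝ) / 2) ^ (-α)|) ≤ C * N := by
  obtain ⟨hα0, hα1⟩ := hα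
  have hC : (0:ℝ) < 4 * (1 + π) / α := by positivity
  refine ⟨1, 1 + 4 * (1 + π) / α, one_pos, by linarith, 4, by norm_num, fun N hN _ => ?_⟩
  constructor
  · calc (1 : ℝ) * N = (N : ℝ) := one_mul _
      _ ≤ ∑ n ∈ Finset.range N, |Fterm α N n| := lower_bound hN
      _ = _ := by simp only [Fterm]
  · calc ∑ n ∈ Finset.range N,
          |2 * (∑ l ∈ Finset.Icc 1 (N / 2 - 1),
              (l : ℝ) ^ (-α) *
                Real.sin ((2 * (n : ℝ) + 1) * Real.pi / (N : ℝ) * (l : ℝ))) +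
            ((N : ℝ) / 2) ^ (-α)|
        = ∑ n ∈ Finset.range N, |Fterm α N n| := by simp only [Fterm]
      _ ≤ (1 + 4 * (1 + π) / α) * N := upper_bound ⟨hα0, hα1⟩ hN
end
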